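/- arXiv:1601.04274 — 2 statements merged into one kernel-verified Lean document; each statement's English description precedes it below -/
import Mathlib

section
/- Let (ξ_k, η_k) be i.i.d. with positive components, Sₙ = ξ₁ + ⋯ + ξₙ, F(x) = P(η ≤ x), and ν(t) = #{k ≥ 0 : S_k ≤ t}. For integer m ≥ 1 define J(m) = ∫_{[0,m]} (F(m+1−y) − F(m−y)) dν(y). Then J(m) ≤ 1 + 2·max_{0 ≤ k ≤ m−1}(ν(k+1) − ν(k)), and for every δ > 0, m^{-δ} J(m) → 0 almost surely as m → ∞. -/
open MeasureTheory ProbabilityTheory Filter Real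
open scoped ENNReal

noncomputable def partialSum {Ω : Type*} (ξ : ℕ → Ω → ℝ) (n : ℕ) (ω : Ω) : ℝ :=
  ∑ i ∈ Finset.range n, ξ i ω

/-- `ν(j+1) - ν(j) = #{k ≥ 0 : j < S_k ≤ j+1}`, as an `ℝ≥0∞`-valued count. -/
noncomputable def renewalIncr {Ω : Type*} (ξ : ℕ → Ω → ℝ) (j : ℕ) (ω : Ω) : ℝ≥0∞ :=
  ∑' k : ℕ, if (j : ℝ) < partialSum ξ k ω ∧ partialSum ξ k ω ≤ (j : ℝ) + 1
    then (1 : ℝ≥0∞) else 0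

/-- `J(m) = ∫_{[0,m]} (F(m+1−y) − F(m−y)) dν(y)
          = ∑_{k≥0} (F(m+1−S_k) − F(m−S_k)) 1{S_k ≤ m}`. -/
noncomputable def prwJ {Ω : Type*} (ξ : ℕ → Ω → ℝ) (F : ℝ → ℝ) (m : ℕ) (ω : Ω) : ℝ :=
  ∑' k : ℕ, if partialSum ξ k ω ≤ (m : ℝ)
    then F ((m : ℝ) + 1 - partialSum ξ k ω) - F ((m : ℝ) - partialSum ξ k ω) else 0

section Basic
variable {Ω : Type*}

lemma partialSum_zero (ξ : ℕ → Ω → ℝ) (ω : Ω) : partialSum ξ 0 ω = 0 :=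
  Finset.sum_range_zero _

lemma partialSum_succ (ξ : ℕ → Ω → ℝ) (k : ℕ) (ω : Ω) :
    partialSum ξ (k + 1) ω = partialSum ξ k ω + ξ k ω :=
  Finset.sum_range_succ _ _

lemma partialSum_strictMono {ξ : ℕ → Ω → ℝ} {ω : Ω} (h : ∀ i, 0 < ξ i ω) :
    StrictMono fun k => partialSum ξ k ω :=
  strictMono_nat_of_lt_succ fun n => by
    rw [partialSum_succ]; linarith [h n]

lemma partialSum_Ico (ξ : ℕ → Ω → ℝ) (ω : Ω) {a b : ℕ} (h : a ≤ b) :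
    ∑ i ∈ Finset.Ico a b, ξ i ω = partialSum ξ b ω - partialSum ξ a ω :=
  Finset.sum_Ico_eq_sub _ h

lemma partialSum_measurable [MeasurableSpace Ω] {ξ : ℕ → Ω → ℝ}
    (hξ : ∀ i, Measurable (ξ i)) (l : ℕ) : Measurable fun ω => partialSum ξ l ω :=
  Finset.measurable_sum _ fun i _ => hξ i

/-- counting: if the set is finite, `renewalIncr` equals its cardinality. -/
lemma renewalIncr_eq_card {ξ : ℕ → Ω → ℝ} {ω : Ω} {j : ℕ}
    (h : {k : ℕ | (j : ℝ) < partialSum ξ k ω ∧ partialSum ξ k ω ≤ (j : ℝ) + 1}.Finite) :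
    renewalIncr ξ j ω = h.toFinset.card := by
  rw [renewalIncr, tsum_eq_sum (s := h.toFinset)
    (fun k hk => by
      rw [Set.Finite.mem_toFinset, Set.mem_setOf_eq] at hk
      simp [hk])]
  rw [Finset.sum_congr rfl (fun k hk => ?_), Finset.sum_const, nsmul_eq_mul, mul_one]
  rw [Set.Finite.mem_toFinset, Set.mem_setOf_eq] at hk
  simp [hk]

lemma exists_finset_of_le_renewalIncr {ξ : ℕ → Ω → ℝ} {ω : Ω} {j : ℕ} {r : ℕ}
    (h : (r : ℝ≥0∞) ≤ renewalIncr ξ j ω) :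
    ∃ s : Finset ℕ, s.card = r ∧
      ∀ k ∈ s, (j : ℝ) < partialSum ξ k ω ∧ partialSum ξ k ω ≤ (j : ℝ) + 1 := by
  by_cases hfin : {k : ℕ | (j : ℝ) < partialSum ξ k ω ∧ partialSum ξ k ω ≤ (j : ℝ) + 1}.Finite
  · rw [renewalIncr_eq_card hfin] at h
    have hr : r ≤ hfin.toFinset.card := by exact_mod_cast h
    obtain ⟨s, hs, hcard⟩ := Finset.exists_subset_card_eq hr
    exact ⟨s, hcard, fun k hk => by
      have := hs hk; rwa [Set.Finite.mem_toFinset, Set.mem_setOf_eq] at this⟩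
  · obtain ⟨s, hs, hcard⟩ := Set.Infinite.exists_subset_card_eq hfin r
    exact ⟨s, hcard, fun k hk => hs hk⟩

lemma le_renewalIncr_of_infinite {ξ : ℕ → Ω → ℝ} {ω : Ω} {j : ℕ}
    (h : ¬ {k : ℕ | (j : ℝ) < partialSum ξ k ω ∧ partialSum ξ k ω ≤ (j : ℝ) + 1}.Finite)
    (r : ℕ) : (r : ℝ≥0∞) ≤ renewalIncr ξ j ω := by
  obtain ⟨s, hs, hcard⟩ := Set.Infinite.exists_subset_card_eq h r
  calc (r : ℝ≥0∞) = ∑ _k ∈ s, (1 : ℝ≥0∞) := by simp [hcard]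
    _ = ∑ k ∈ s, if (j : ℝ) < partialSum ξ k ω ∧ partialSum ξ k ω ≤ (j : ℝ) + 1
        then (1 : ℝ≥0∞) else 0 :=
        Finset.sum_congr rfl (fun k hk => by have := hs hk; simp_all)
    _ ≤ renewalIncr ξ j ω := ENNReal.sum_le_tsum _

end Basic

section Analytic

open Filter

lemma tendsto_poly_geo (J : ℕ) {r : ℝ} (h0 : 0 ≤ r) (h1 : r < 1) :
    Tendsto (fun n : ℕ => ((n : ℝ) + 1) ^ J * r ^ n) atTop (nhds 0) := by
  rcases eq_or_lt_of_le h0 with h | h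
  · apply Tendsto.congr' _ (tendsto_const_nhds (x := (0:ℝ)))
    filter_upwards [eventually_ge_atTop 1] with n hn
    rw [← h, zero_pow (by omega), mul_zero]
  · have hsum := summable_pow_mul_geometric_of_norm_lt_one (R := ℝ) J
      (r := r) (by rwa [Real.norm_eq_abs, abs_of_nonneg h0])
    have hsum2 : Summable (fun n : ℕ => ((n : ℝ) + 1) ^ J * r ^ (n + 1)) := by
      have := (summable_nat_add_iff (f := fun n : ℕ => (n : ℝ) ^ J * r ^ n) 1).mpr hsum
      refine this.congr fun n => ?_
      push_cast; ring
    have h2 := (hsum2.tendsto_atTop_zero).const_mul r⁻¹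
    rw [mul_zero] at h2
    refine h2.congr fun n => ?_
    field_simp
    ring

lemma tendsto_choose_geo (c : ℕ) {r : ℝ} (h0 : 0 ≤ r) (h1 : r < 1) :
    Tendsto (fun n : ℕ => (((n + c).choose c : ℕ) : ℝ) * r ^ n) atTop (nhds 0) := by
  have hb : ∀ n : ℕ, (((n + c).choose c : ℕ) : ℝ) * r ^ n
      ≤ ((c:ℝ) + 1) ^ c * (((n : ℝ) + 1) ^ c * r ^ n) := by
    intro n
    have h1' : ((n + c).choose c) ≤ (n + c) ^ c := Nat.choose_le_pow _ _
    have h2' : (n + c) ^ c ≤ ((n + 1) * (c + 1)) ^ c :=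
      Nat.pow_le_pow_left (by nlinarith) _
    have h3' : (((n + c).choose c : ℕ) : ℝ) ≤ (((n:ℝ) + 1) * ((c:ℝ) + 1)) ^ c := by
      calc (((n + c).choose c : ℕ) : ℝ) ≤ (((n + 1) * (c + 1) : ℕ) ^ c : ℕ) := by
            exact_mod_cast le_trans h1' h2'
        _ = (((n:ℝ) + 1) * ((c:ℝ) + 1)) ^ c := by push_cast; ring
    have hrn : (0:ℝ) ≤ r ^ n := pow_nonneg h0 n
    calc (((n + c).choose c : ℕ) : ℝ) * r ^ n ≤ (((n:ℝ) + 1) * ((c:ℝ) + 1)) ^ c * r ^ n :=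
          mul_le_mul_of_nonneg_right h3' hrn
      _ = ((c:ℝ) + 1) ^ c * (((n : ℝ) + 1) ^ c * r ^ n) := by rw [mul_pow]; ring
  have hub := (tendsto_poly_geo c h0 h1).const_mul (((c:ℝ) + 1) ^ c)
  rw [mul_zero] at hub
  refine squeeze_zero (fun n => ?_) hb hub
  positivity

lemma choose_le_poly (c n : ℕ) :
    (((n + c).choose c : ℕ) : ℝ) ≤ ((c:ℝ) + 1) ^ c * ((n:ℝ) + 1) ^ c := by
  have h1' : ((n + c).choose c) ≤ (n + c) ^ c := Nat.choose_le_pow _ _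
  have h2' : (n + c) ^ c ≤ ((n + 1) * (c + 1)) ^ c :=
    Nat.pow_le_pow_left (by nlinarith) _
  calc (((n + c).choose c : ℕ) : ℝ) ≤ (((n + 1) * (c + 1) : ℕ) ^ c : ℕ) := by
        exact_mod_cast le_trans h1' h2'
    _ = (((n:ℝ) + 1) * ((c:ℝ) + 1)) ^ c := by push_cast; ring
    _ = ((c:ℝ) + 1) ^ c * ((n:ℝ) + 1) ^ c := by rw [mul_pow]; ring

end Analytic

section Deterministic
variable {Ω : Type*}

lemma prwJ_nonneg (ξ : ℕ → Ω → ℝ) (F : ℝ → ℝ) (hFmono : Monotone F) (m : ℕ) (ω : Ω) :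
    0 ≤ prwJ ξ F m ω := by
  apply tsum_nonneg
  intro k
  by_cases h : partialSum ξ k ω ≤ (m:ℝ)
  · simp only [h, if_true]
    exact sub_nonneg.mpr (hFmono (by linarith))
  · simp only [h, if_false]
    exact le_refl 0

lemma det_part1 (ξ : ℕ → Ω → ℝ) (F : ℝ → ℝ) (hFmono : Monotone F)
    (hF0 : ∀ x, 0 ≤ F x) (hF1 : ∀ x, F x ≤ 1) (ω : Ω)
    (hpos : ∀ i, 0 < ξ i ω)
    (hfin : ∀ j : ℕ, {k : ℕ | (j:ℝ) < partialSum ξ k ω ∧ partialSum ξ k ω ≤ (j:ℝ)+1}.Finite)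
    (m : ℕ) (hm : 1 ≤ m) (hne : (Finset.range m).Nonempty) :
    prwJ ξ F m ω ≤ 1 + 2 * (Finset.range m).sup' hne (fun k => (renewalIncr ξ k ω).toReal) := by
  classical
  set s : ℕ → ℝ := fun k => partialSum ξ k ω with hs
  have hsm : StrictMono s := partialSum_strictMono hpos
  have hs0 : s 0 = 0 := partialSum_zero ξ ω
  set Tj : ℕ → Finset ℕ := fun j => (hfin j).toFinset with hTj
  set T : Finset ℕ := insert 0 ((Finset.range m).biUnion Tj) with hT
  set f : ℕ → ℝ := fun k =>
    if s k ≤ (m:ℝ) then F ((m:ℝ) + 1 - s k) - F ((m:ℝ) - s k) else 0 with hf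
  have hmemTj : ∀ j k, k ∈ Tj j ↔ ((j:ℝ) < s k ∧ s k ≤ (j:ℝ) + 1) := fun j k => by
    simp [hTj, Set.Finite.mem_toFinset, hs]
  have hcover : ∀ k, k ∉ T → f k = 0 := by
    intro k hk
    rw [hf]
    simp only [ite_eq_right_iff]
    intro hkm
    exfalso
    apply hk
    rcases Nat.eq_zero_or_pos k with rfl | hkpos
    · exact Finset.mem_insert_self _ _
    · have hposk : 0 < s k := by
        have := hsm hkpos
        rwa [hs0] at this
      set c := ⌈s k⌉₊ with hc
      have hc1 : 1 ≤ c := Nat.one_le_ceil_iff.mpr hposk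
      have hcm : c ≤ m := Nat.ceil_le.mpr (by exact_mod_cast hkm)
      refine Finset.mem_insert_of_mem (Finset.mem_biUnion.mpr ⟨c - 1, ?_, ?_⟩)
      · exact Finset.mem_range.mpr (by omega)
      · refine (hmemTj _ _).mpr ⟨?_, ?_⟩
        · exact_mod_cast Nat.lt_ceil.mp (by omega)
        · have : ((c - 1 : ℕ) : ℝ) + 1 = (c : ℝ) := by
            push_cast [Nat.cast_sub hc1]; ring
          rw [this]
          exact le_trans (Nat.le_ceil _) le_rfl
  have hJ : prwJ ξ F m ω = ∑ k ∈ T, f k := by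
    rw [prwJ]; exact tsum_eq_sum hcover
  have h0nb : 0 ∉ (Finset.range m).biUnion Tj := by
    simp only [Finset.mem_biUnion, not_exists]
    intro j hj
    obtain ⟨-, hmem⟩ := hj
    rw [hmemTj] at hmem
    have h1 := hmem.1
    rw [hs0] at h1
    have : (0:ℝ) ≤ (j:ℝ) := Nat.cast_nonneg j
    linarith
  have hdisj : Set.PairwiseDisjoint ↑(Finset.range m) Tj := by
    intro a _ b _ hab
    apply Finset.disjoint_left.mpr
    intro k hka hkb
    rw [hmemTj] at hka hkb
    rcases Nat.lt_or_ge a b with h | h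
    · have : (a:ℝ) + 1 ≤ (b:ℝ) := by exact_mod_cast h
      linarith [hka.2, hkb.1]
    · have hba : b < a := by omega
      have : (b:ℝ) + 1 ≤ (a:ℝ) := by exact_mod_cast hba
      linarith [hkb.2, hka.1]
  have hsum1 : ∑ k ∈ T, f k = f 0 + ∑ k ∈ (Finset.range m).biUnion Tj, f k :=
    Finset.sum_insert h0nb
  have hsum2 : ∑ k ∈ (Finset.range m).biUnion Tj, f k = ∑ j ∈ Finset.range m, ∑ k ∈ Tj j, f k :=
    Finset.sum_biUnion hdisj
  set M := (Finset.range m).sup' hne (fun k => (renewalIncr ξ k ω).toReal) with hMdef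
  have hM0 : 0 ≤ M := le_trans ENNReal.toReal_nonneg
    (Finset.le_sup' (fun k => (renewalIncr ξ k ω).toReal)
      (Finset.mem_range.mpr (by omega : (0:ℕ) < m)))
  set d : ℕ → ℝ := fun j => F ((m:ℝ) + 1 - j) - F ((m:ℝ) - 1 - j) with hd
  have hd0 : ∀ j, 0 ≤ d j := fun j => sub_nonneg.mpr (hFmono (by linarith))
  have hbound : ∀ j ∈ Finset.range m, ∑ k ∈ Tj j, f k ≤ M * d j := by
    intro j hj
    have hjm : j < m := Finset.mem_range.mp hj
    have hterm : ∀ k ∈ Tj j, f k ≤ d j := by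
      intro k hk
      rw [hmemTj] at hk
      have hkm : s k ≤ (m:ℝ) := le_trans hk.2 (by exact_mod_cast Nat.succ_le_of_lt hjm)
      rw [hf]
      simp only [hkm, if_true]
      have e1 : F ((m:ℝ) + 1 - s k) ≤ F ((m:ℝ) + 1 - j) := hFmono (by linarith [hk.1])
      have e2 : F ((m:ℝ) - 1 - j) ≤ F ((m:ℝ) - s k) := hFmono (by linarith [hk.2])
      have hdrfl : d j = F ((m:ℝ) + 1 - (j:ℝ)) - F ((m:ℝ) - 1 - (j:ℝ)) := rfl
      rw [hdrfl]
      linarith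
    have hcard : ((Tj j).card : ℝ) = (renewalIncr ξ j ω).toReal := by
      rw [renewalIncr_eq_card (hfin j)]
      simp
      rfl
    calc ∑ k ∈ Tj j, f k ≤ (Tj j).card • d j := Finset.sum_le_card_nsmul _ _ _ hterm
      _ = ((Tj j).card : ℝ) * d j := nsmul_eq_mul _ _
      _ ≤ M * d j := by
          apply mul_le_mul_of_nonneg_right _ (hd0 j)
          rw [hcard]
          exact Finset.le_sup' (fun k => (renewalIncr ξ k ω).toReal) hj
  have htel : ∑ j ∈ Finset.range m, d j ≤ 2 := by
    set u : ℕ → ℝ := fun j => F ((m:ℝ) + 1 - j) with hu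
    set v : ℕ → ℝ := fun j => F ((m:ℝ) - j) with hv
    have hdj : ∀ j : ℕ, d j = (u j - u (j+1)) + (v j - v (j+1)) := by
      intro j
      show F ((m:ℝ) + 1 - (j:ℝ)) - F ((m:ℝ) - 1 - (j:ℝ)) =
        (F ((m:ℝ) + 1 - (j:ℝ)) - F ((m:ℝ) + 1 - ((j+1:ℕ):ℝ))) +
        (F ((m:ℝ) - (j:ℝ)) - F ((m:ℝ) - ((j+1:ℕ):ℝ)))
      have e1 : (m:ℝ) + 1 - ((j+1 : ℕ):ℝ) = (m:ℝ) - j := by push_cast; ring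
      have e2 : (m:ℝ) - ((j+1 : ℕ):ℝ) = (m:ℝ) - 1 - j := by push_cast; ring
      rw [e1, e2]
      ring
    rw [Finset.sum_congr rfl (fun j _ => hdj j), Finset.sum_add_distrib,
      Finset.sum_range_sub' u m, Finset.sum_range_sub' v m]
    have : u 0 = F ((m:ℝ) + 1) := by rw [hu]; norm_num
    have hu0 : u 0 ≤ 1 := by rw [hu]; simpa using hF1 _
    have hv0 : v 0 ≤ 1 := by rw [hv]; simpa using hF1 _
    linarith [hF0 ((m:ℝ) + 1 - m), hF0 ((m:ℝ) - m)]
  have hf0 : f 0 ≤ 1 := by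
    rw [hf]
    simp only [hs0]
    have hcond : (0:ℝ) ≤ (m:ℝ) := Nat.cast_nonneg m
    simp only [hcond, if_true]
    linarith [hF1 ((m:ℝ) + 1 - 0), hF0 ((m:ℝ) - 0)]
  calc prwJ ξ F m ω = f 0 + ∑ j ∈ Finset.range m, ∑ k ∈ Tj j, f k := by rw [hJ, hsum1, hsum2]
    _ ≤ 1 + ∑ j ∈ Finset.range m, M * d j := by
        have h1 : ∑ j ∈ Finset.range m, ∑ k ∈ Tj j, f k ≤ ∑ j ∈ Finset.range m, M * d j :=
          Finset.sum_le_sum hbound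
        linarith
    _ = 1 + M * ∑ j ∈ Finset.range m, d j := by rw [Finset.mul_sum]
    _ ≤ 1 + M * 2 := by nlinarith [htel, hM0]
    _ = 1 + 2 * M := by ring

end Deterministic

section Probabilistic

lemma key_estimate {Ω : Type*} [MeasurableSpace Ω] (μ : Measure Ω) [IsProbabilityMeasure μ]
    (ξ : ℕ → Ω → ℝ) (hξ : ∀ i, Measurable (ξ i))
    (hindep : iIndepFun ξ μ)
    (hid : ∀ i, IdentDistrib (ξ i) (ξ 0) μ μ)
    (hpos : ∀ᵐ ω ∂μ, ∀ i, 0 < ξ i ω)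
    {ε : ℝ} (hε : 0 < ε) (j n : ℕ) :
    μ {ω | ((n + ⌈1/ε⌉₊ + 1 : ℕ) : ℝ≥0∞) ≤ renewalIncr ξ j ω}
      ≤ ((n + ⌈1/ε⌉₊).choose ⌈1/ε⌉₊ : ℝ≥0∞) * (μ {ω | ξ 0 ω ≤ ε}) ^ n := by
  classical
  set c := ⌈1/ε⌉₊ with hc
  set β := μ {ω | ξ 0 ω ≤ ε} with hβ
  set inI : ℝ → Prop := fun x => (j:ℝ) < x ∧ x ≤ (j:ℝ) + 1 with hinI
  set FE : ℕ → Set Ω := fun k =>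
    {ω | inI (partialSum ξ k ω) ∧ ∀ l, l < k → ¬ inI (partialSum ξ l ω)} with hFE
  set BE : ℕ → Set Ω := fun k => {ω | ∑ i ∈ Finset.Ico k (k + (n + c)), ξ i ω ≤ 1} with hBE
  set Pos : Set Ω := {ω | ∀ i, 0 < ξ i ω} with hPos
  have hPosnull : μ Posᶜ = 0 := by
    rw [ae_iff] at hpos
    convert hpos using 2
    rfl
  have hIm : ∀ l, MeasurableSet {ω | inI (partialSum ξ l ω)} := by
    intro l
    have : {ω | inI (partialSum ξ l ω)}
        = (fun ω => partialSum ξ l ω) ⁻¹' (Set.Ioc (j:ℝ) ((j:ℝ)+1)) := by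
      ext ω; simp [hinI, Set.mem_Ioc]
    rw [this]
    exact (partialSum_measurable hξ l) measurableSet_Ioc
  have hFEmeas : ∀ k, MeasurableSet (FE k) := by
    intro k
    have : FE k = {ω | inI (partialSum ξ k ω)}
        ∩ ⋂ l, ⋂ (_ : l < k), {ω | inI (partialSum ξ l ω)}ᶜ := by
      ext ω
      simp only [hFE, Set.mem_inter_iff, Set.mem_setOf_eq, Set.mem_iInter, Set.mem_compl_iff]
    rw [this]
    exact (hIm k).inter (MeasurableSet.iInter fun l => MeasurableSet.iInter fun _ => (hIm l).compl)
  -- Step 1 : pointwise inclusion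
  have step1 : {ω | ((n + c + 1 : ℕ) : ℝ≥0∞) ≤ renewalIncr ξ j ω} ∩ Pos ⊆ ⋃ k, FE k ∩ BE k := by
    rintro ω ⟨hr, hp⟩
    obtain ⟨s, hcard, hmem⟩ := exists_finset_of_le_renewalIncr hr
    have hp' : ∀ i, 0 < ξ i ω := hp
    have hmono := partialSum_strictMono hp'
    have hsne : s.Nonempty := Finset.card_pos.mp (by omega)
    obtain ⟨k1, hk1⟩ := hsne
    have hex : ∃ k, inI (partialSum ξ k ω) := ⟨k1, hmem k1 hk1⟩
    set k0 := Nat.find hex with hk0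
    have hk0I : inI (partialSum ξ k0 ω) := Nat.find_spec hex
    have hk0min : ∀ l, l < k0 → ¬ inI (partialSum ξ l ω) := fun l hl => Nat.find_min hex hl
    refine Set.mem_iUnion.mpr ⟨k0, ⟨hk0I, hk0min⟩, ?_⟩
    have hge : ∀ k ∈ s, k0 ≤ k := fun k hk => Nat.find_min' hex (hmem k hk)
    have hex2 : ∃ k' ∈ s, k0 + (n + c) ≤ k' := by
      by_contra hcon
      push_neg at hcon
      have hsub : s ⊆ Finset.Ico k0 (k0 + (n + c)) := fun k hk =>
        Finset.mem_Ico.mpr ⟨hge k hk, hcon k hk⟩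
      have := Finset.card_le_card hsub
      rw [Nat.card_Ico] at this
      omega
    obtain ⟨k', hk's, hk'⟩ := hex2
    show ∑ i ∈ Finset.Ico k0 (k0 + (n + c)), ξ i ω ≤ 1
    rw [partialSum_Ico ξ ω (Nat.le_add_right _ _)]
    have h1 : partialSum ξ (k0 + (n + c)) ω ≤ partialSum ξ k' ω := hmono.monotone hk'
    have h2 : partialSum ξ k' ω ≤ (j:ℝ) + 1 := (hmem k' hk's).2
    have h3 : (j:ℝ) < partialSum ξ k0 ω := hk0I.1
    linarith
  -- independence factorization
  have hfact : ∀ (k : ℕ) (t : Finset ℕ), (∀ i ∈ t, k ≤ i) →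
      μ (FE k ∩ ⋂ i ∈ t, {ω | ξ i ω ≤ ε}) = μ (FE k) * β ^ t.card := by
    intro k t ht
    set Sf : Finset ℕ := Finset.range k with hSf
    set X : Ω → ({x // x ∈ Sf} → ℝ) := fun ω i => ξ (i : ℕ) ω with hX
    set Y : Ω → ({x // x ∈ t} → ℝ) := fun ω i => ξ (i : ℕ) ω with hY
    have hdisj : Disjoint Sf t := by
      rw [Finset.disjoint_left]
      intro a ha hat
      rw [hSf, Finset.mem_range] at ha
      exact absurd (ht a hat) (by omega)
    have hIndep : IndepFun X Y μ := hindep.indepFun_finset Sf t hdisj hξ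
    set g : ℕ → ({x // x ∈ Sf} → ℝ) → ℝ :=
      fun l v => ∑ i ∈ Sf.attach, if (i : ℕ) < l then v i else 0 with hg
    have hgmeas : ∀ l, Measurable (g l) := by
      intro l
      apply Finset.measurable_sum
      intro i _
      by_cases hil : (i : ℕ) < l
      · simpa [hil] using measurable_pi_apply i
      · simpa [hil] using (measurable_const : Measurable fun _ : {x // x ∈ Sf} → ℝ => (0:ℝ))
    have hgX : ∀ l, l ≤ k → ∀ ω, g l (X ω) = partialSum ξ l ω := by
      intro l hl ω
      show (∑ i ∈ Sf.attach, if (i:ℕ) < l then ξ (i:ℕ) ω else 0) = partialSum ξ l ω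
      rw [Finset.sum_attach Sf (fun i => if i < l then ξ i ω else 0)]
      rw [← Finset.sum_filter]
      have hfil : Sf.filter (· < l) = Finset.range l := by
        ext x
        simp only [hSf, Finset.mem_filter, Finset.mem_range]
        omega
      rw [hfil]
      rfl
    set A : Set ({x // x ∈ Sf} → ℝ) := {v | inI (g k v) ∧ ∀ l, l < k → ¬ inI (g l v)} with hA
    have hAmeas : MeasurableSet A := by
      have hIm' : ∀ l, MeasurableSet {v : {x // x ∈ Sf} → ℝ | inI (g l v)} := by
        intro l
        have : {v : {x // x ∈ Sf} → ℝ | inI (g l v)}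
            = g l ⁻¹' (Set.Ioc (j:ℝ) ((j:ℝ)+1)) := by
          ext v; simp [hinI, Set.mem_Ioc]
        rw [this]
        exact (hgmeas l) measurableSet_Ioc
      have : A = {v : {x // x ∈ Sf} → ℝ | inI (g k v)}
          ∩ ⋂ l, ⋂ (_ : l < k), {v : {x // x ∈ Sf} → ℝ | inI (g l v)}ᶜ := by
        ext v
        simp only [hA, Set.mem_inter_iff, Set.mem_setOf_eq, Set.mem_iInter, Set.mem_compl_iff]
      rw [this]
      exact (hIm' k).inter
        (MeasurableSet.iInter fun l => MeasurableSet.iInter fun _ => (hIm' l).compl)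
    have hFEX : FE k = X ⁻¹' A := by
      ext ω
      simp only [hFE, hA, Set.mem_preimage, Set.mem_setOf_eq]
      constructor
      · rintro ⟨h1, h2⟩
        exact ⟨by rwa [hgX k le_rfl], fun l hl => by rw [hgX l (le_of_lt hl)]; exact h2 l hl⟩
      · rintro ⟨h1, h2⟩
        refine ⟨by rwa [hgX k le_rfl] at h1, fun l hl => ?_⟩
        have := h2 l hl
        rwa [hgX l (le_of_lt hl)] at this
    set B : Set ({x // x ∈ t} → ℝ) := ⋂ i : {x // x ∈ t}, (fun v => v i) ⁻¹' Set.Iic ε with hB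
    have hBmeas : MeasurableSet B :=
      MeasurableSet.iInter fun i => (measurable_pi_apply i) measurableSet_Iic
    have hYB : (⋂ i ∈ t, {ω | ξ i ω ≤ ε}) = Y ⁻¹' B := by
      ext ω
      simp [hB, hY, Set.mem_iInter, Set.mem_preimage, Set.mem_Iic, Subtype.forall]
    rw [hFEX, hYB, hIndep.measure_inter_preimage_eq_mul A B hAmeas hBmeas]
    congr 1
    rw [← hYB]
    have hprod := hindep.measure_inter_preimage_eq_mul (sets := fun _ => Set.Iic ε) t
      (fun i _ => measurableSet_Iic)
    have heq : (⋂ i ∈ t, {ω | ξ i ω ≤ ε}) = ⋂ i ∈ t, ξ i ⁻¹' Set.Iic ε := rfl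
    rw [heq, hprod,
      Finset.prod_congr rfl (fun i _ => (hid i).measure_mem_eq measurableSet_Iic),
      Finset.prod_const, hβ]
    rfl
  have hblockcard : ∀ k, (Finset.Ico k (k + (n + c))).card = n + c := fun k => by
    rw [Nat.card_Ico]; omega
  -- step 4
  have step4 : ∀ k, μ (FE k ∩ BE k) ≤ ((n + c).choose c : ℝ≥0∞) * β ^ n * μ (FE k) := by
    intro k
    have incl : FE k ∩ BE k ∩ Pos ⊆
        ⋃ t ∈ Finset.powersetCard n (Finset.Ico k (k + (n + c))),
          (FE k ∩ ⋂ i ∈ t, {ω | ξ i ω ≤ ε}) := by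
      rintro ω ⟨⟨hFEω, hBEω⟩, hp⟩
      have hp' : ∀ i, 0 < ξ i ω := hp
      set block := Finset.Ico k (k + (n + c)) with hblock
      set bad := block.filter (fun i => ε < ξ i ω) with hbad
      have hBE1 : ∑ i ∈ block, ξ i ω ≤ 1 := hBEω
      have hbadcard : bad.card ≤ c := by
        by_contra hgt
        push_neg at hgt
        obtain ⟨u, hub, hucard⟩ := Finset.exists_subset_card_eq (Nat.succ_le_of_lt hgt)
        have hune : u.Nonempty := Finset.card_pos.mp (by omega)
        have hsum_u : ∑ i ∈ u, ε < ∑ i ∈ u, ξ i ω :=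
          Finset.sum_lt_sum_of_nonempty hune
            (fun i hi => (Finset.mem_filter.mp (hub hi)).2)
        have hsum_ub : ∑ i ∈ u, ξ i ω ≤ ∑ i ∈ block, ξ i ω :=
          Finset.sum_le_sum_of_subset_of_nonneg (hub.trans (Finset.filter_subset _ _))
            (fun i _ _ => (hp' i).le)
        rw [Finset.sum_const, hucard, nsmul_eq_mul] at hsum_u
        have hce : 1/ε ≤ (c:ℝ) := Nat.le_ceil _
        have h1ε : (1:ℝ) ≤ (c:ℝ) * ε := by
          rw [div_le_iff₀ hε] at hce
          linarith
        have hfin : (1:ℝ) < ((c+1 : ℕ) : ℝ) * ε := by push_cast; nlinarith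
        have : ((c+1:ℕ):ℝ) * ε < 1 := lt_of_lt_of_le hsum_u (le_trans hsum_ub hBE1)
        linarith
      set good := block \ bad with hgood
      have hgoodcard : n ≤ good.card := by
        have h1 : good.card = block.card - bad.card := Finset.card_sdiff_of_subset (Finset.filter_subset _ _)
        have h2 : block.card = n + c := hblockcard k
        omega
      obtain ⟨t, htg, htcard⟩ := Finset.exists_subset_card_eq hgoodcard
      refine Set.mem_iUnion₂.mpr
        ⟨t, Finset.mem_powersetCard.mpr ⟨htg.trans (Finset.sdiff_subset), htcard⟩, hFEω, ?_⟩
      refine Set.mem_iInter₂.mpr fun i hi => ?_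
      have hig := htg hi
      rw [hgood, Finset.mem_sdiff] at hig
      have hnot : ¬ (ε < ξ i ω) := fun hlt => hig.2 (Finset.mem_filter.mpr ⟨hig.1, hlt⟩)
      exact le_of_not_gt hnot
    calc μ (FE k ∩ BE k) = μ (FE k ∩ BE k ∩ Pos) := (measure_inter_conull hPosnull).symm
      _ ≤ μ (⋃ t ∈ Finset.powersetCard n (Finset.Ico k (k + (n + c))),
            (FE k ∩ ⋂ i ∈ t, {ω | ξ i ω ≤ ε})) := measure_mono incl
      _ ≤ ∑ t ∈ Finset.powersetCard n (Finset.Ico k (k + (n + c))),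
            μ (FE k ∩ ⋂ i ∈ t, {ω | ξ i ω ≤ ε}) := measure_biUnion_finset_le _ _
      _ = ∑ t ∈ Finset.powersetCard n (Finset.Ico k (k + (n + c))), μ (FE k) * β ^ n := by
            refine Finset.sum_congr rfl (fun t htmem => ?_)
            have hsub := (Finset.mem_powersetCard.mp htmem).1
            have hcardt := (Finset.mem_powersetCard.mp htmem).2
            rw [hfact k t (fun i hi => (Finset.mem_Ico.mp (hsub hi)).1), hcardt]
      _ = ((n + c).choose c : ℝ≥0∞) * β ^ n * μ (FE k) := by
            rw [Finset.sum_const, Finset.card_powersetCard, hblockcard k]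
            have hchoose : (n + c).choose n = (n + c).choose c := by
              rw [← Nat.choose_symm (Nat.le_add_right n c)]
              congr 1
              omega
            rw [hchoose, nsmul_eq_mul]
            ring
  -- step 5
  have hFEdisj : Pairwise (Function.onFun Disjoint FE) := by
    intro a b hab
    rw [Function.onFun, Set.disjoint_left]
    intro ω ha hb
    rcases Nat.lt_or_ge a b with h | h
    · exact hb.2 a h ha.1
    · exact ha.2 b (by omega) hb.1
  have step5 : ∑' k, μ (FE k) ≤ 1 := by
    rw [← measure_iUnion hFEdisj hFEmeas]
    exact prob_le_one
  calc μ {ω | ((n + c + 1 : ℕ) : ℝ≥0∞) ≤ renewalIncr ξ j ω}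
      = μ ({ω | ((n + c + 1 : ℕ) : ℝ≥0∞) ≤ renewalIncr ξ j ω} ∩ Pos) :=
        (measure_inter_conull hPosnull).symm
    _ ≤ μ (⋃ k, FE k ∩ BE k) := measure_mono step1
    _ ≤ ∑' k, μ (FE k ∩ BE k) := measure_iUnion_le _
    _ ≤ ∑' k, ((n + c).choose c : ℝ≥0∞) * β ^ n * μ (FE k) := ENNReal.tsum_le_tsum step4
    _ = ((n + c).choose c : ℝ≥0∞) * β ^ n * ∑' k, μ (FE k) := ENNReal.tsum_mul_left
    _ ≤ ((n + c).choose c : ℝ≥0∞) * β ^ n * 1 := mul_le_mul_right step5 _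
    _ = ((n + c).choose c : ℝ≥0∞) * β ^ n := mul_one _

end Probabilistic

section AEFinite

lemma exists_eps {Ω : Type*} [MeasurableSpace Ω] (μ : Measure Ω) [IsProbabilityMeasure μ]
    (f : Ω → ℝ) (hf : Measurable f) (h : ∀ᵐ ω ∂μ, 0 < f ω) :
    ∃ ε : ℝ, 0 < ε ∧ μ {ω | f ω ≤ ε} < 1 := by
  have hs : ∀ ε : ℝ, MeasurableSet {ω | ε < f ω} := fun ε => hf measurableSet_Ioi
  have h1 : μ {ω | 0 < f ω} = 1 := by
    rw [← prob_compl_eq_zero_iff (hs 0)]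
    rw [ae_iff] at h
    convert h using 2
    rfl
  have hU : {ω | 0 < f ω} = ⋃ n : ℕ, {ω | 1/((n:ℝ)+1) < f ω} := by
    ext ω
    simp only [Set.mem_setOf_eq, Set.mem_iUnion]
    constructor
    · intro h0
      obtain ⟨n, hn⟩ := exists_nat_one_div_lt h0
      exact ⟨n, by exact_mod_cast hn⟩
    · rintro ⟨n, hn⟩
      have : (0:ℝ) < 1/((n:ℝ)+1) := by positivity
      linarith
  have hex : ∃ n : ℕ, 0 < μ {ω | 1/((n:ℝ)+1) < f ω} := by
    by_contra hcon
    push_neg at hcon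
    have hz : ∀ n : ℕ, μ {ω | 1/((n:ℝ)+1) < f ω} = 0 := fun n => le_antisymm (hcon n) (zero_le)
    have : μ {ω | 0 < f ω} = 0 := by
      rw [hU]
      exact le_antisymm (le_trans (measure_iUnion_le _)
        (le_of_eq (by simp only [hz, tsum_zero]))) (zero_le)
    rw [h1] at this
    exact one_ne_zero this
  obtain ⟨n, hn⟩ := hex
  refine ⟨1/((n:ℝ)+1), by positivity, ?_⟩
  have hcompl : {ω | f ω ≤ 1/((n:ℝ)+1)} = {ω | 1/((n:ℝ)+1) < f ω}ᶜ := by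
    ext ω
    simp [not_lt]
  rw [hcompl, prob_compl_eq_one_sub (hs _)]
  exact ENNReal.sub_lt_self ENNReal.one_ne_top one_ne_zero (by exact hn.ne')

lemma choose_pow_ofReal {β : ℝ≥0∞} (hβ : β ≠ ∞) (a n : ℕ) :
    (a : ℝ≥0∞) * β ^ n = ENNReal.ofReal ((a : ℝ) * β.toReal ^ n) := by
  rw [ENNReal.ofReal_mul (by positivity), ENNReal.ofReal_natCast,
    ENNReal.ofReal_pow ENNReal.toReal_nonneg, ENNReal.ofReal_toReal hβ]

lemma ae_finite_renewal {Ω : Type*} [MeasurableSpace Ω] (μ : Measure Ω) [IsProbabilityMeasure μ]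
    (ξ : ℕ → Ω → ℝ) (hξ : ∀ i, Measurable (ξ i))
    (hindep : iIndepFun ξ μ)
    (hid : ∀ i, IdentDistrib (ξ i) (ξ 0) μ μ)
    (hpos : ∀ᵐ ω ∂μ, ∀ i, 0 < ξ i ω)
    {ε : ℝ} (hε : 0 < ε) (hβ : μ {ω | ξ 0 ω ≤ ε} < 1) :
    ∀ᵐ ω ∂μ, ∀ j : ℕ,
      {k : ℕ | (j:ℝ) < partialSum ξ k ω ∧ partialSum ξ k ω ≤ (j:ℝ) + 1}.Finite := by
  rw [ae_all_iff]
  intro j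
  rw [ae_iff]
  set c := ⌈1/ε⌉₊ with hc
  set β := μ {ω | ξ 0 ω ≤ ε} with hβdef
  set βr := β.toReal with hβr
  have hβtop : β ≠ ∞ := measure_ne_top μ _
  have hβr1 : βr < 1 := by
    rw [hβr]
    rw [← ENNReal.toReal_one]
    exact ENNReal.toReal_lt_toReal hβtop ENNReal.one_ne_top |>.mpr hβ
  have h0 : Tendsto (fun n : ℕ => (((n+c).choose c : ℕ) : ℝ) * βr ^ n) atTop (nhds 0) :=
    tendsto_choose_geo c ENNReal.toReal_nonneg hβr1
  have h1 : Tendsto (fun n : ℕ => ENNReal.ofReal ((((n+c).choose c : ℕ) : ℝ) * βr ^ n))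
      atTop (nhds 0) := by
    have := ENNReal.tendsto_ofReal h0
    simpa using this
  have hle : ∀ n : ℕ, μ {ω | ¬ {k : ℕ | (j:ℝ) < partialSum ξ k ω
      ∧ partialSum ξ k ω ≤ (j:ℝ) + 1}.Finite}
      ≤ ENNReal.ofReal ((((n+c).choose c : ℕ) : ℝ) * βr ^ n) := by
    intro n
    have hsub : {ω | ¬ {k : ℕ | (j:ℝ) < partialSum ξ k ω ∧ partialSum ξ k ω ≤ (j:ℝ) + 1}.Finite}
        ⊆ {ω | ((n + c + 1 : ℕ) : ℝ≥0∞) ≤ renewalIncr ξ j ω} :=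
      fun ω hω => le_renewalIncr_of_infinite hω _
    calc μ _ ≤ μ {ω | ((n + c + 1 : ℕ) : ℝ≥0∞) ≤ renewalIncr ξ j ω} := measure_mono hsub
      _ ≤ ((n + c).choose c : ℝ≥0∞) * β ^ n := key_estimate μ ξ hξ hindep hid hpos hε j n
      _ = ENNReal.ofReal ((((n+c).choose c : ℕ) : ℝ) * βr ^ n) := choose_pow_ofReal hβtop _ n
  exact le_antisymm (ge_of_tendsto' h1 hle) (zero_le)

end AEFinite

section BC

lemma ae_eventually_small {Ω : Type*} [MeasurableSpace Ω] (μ : Measure Ω) [IsProbabilityMeasure μ]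
    (ξ : ℕ → Ω → ℝ) (hξ : ∀ i, Measurable (ξ i))
    (hindep : iIndepFun ξ μ)
    (hid : ∀ i, IdentDistrib (ξ i) (ξ 0) μ μ)
    (hpos : ∀ᵐ ω ∂μ, ∀ i, 0 < ξ i ω)
    {ε : ℝ} (hε : 0 < ε) (hβ : μ {ω | ξ 0 ω ≤ ε} < 1)
    {δ : ℝ} (hδ : 0 < δ) (L : ℕ) :
    ∀ᵐ ω ∂μ, ∀ᶠ m : ℕ in atTop, ∀ j, j < m →
      renewalIncr ξ j ω < ((⌈(m:ℝ)^δ / ((L:ℝ)+1)⌉₊ : ℕ) : ℝ≥0∞) := by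
  classical
  set c := ⌈1/ε⌉₊ with hc
  set β := μ {ω | ξ 0 ω ≤ ε} with hβdef
  set βr := β.toReal with hβr
  have hβtop : β ≠ ∞ := measure_ne_top μ _
  have hβr0 : (0:ℝ) ≤ βr := ENNReal.toReal_nonneg
  have hβr1 : βr < 1 := by
    rw [hβr, ← ENNReal.toReal_one]
    exact (ENNReal.toReal_lt_toReal hβtop ENNReal.one_ne_top).mpr hβ
  set t : ℕ → ℕ := fun m => ⌈(m:ℝ)^δ / ((L:ℝ)+1)⌉₊ with htdef
  set nn : ℕ → ℕ := fun m => t m - c - 1 with hnn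
  set u : ℕ → ℝ := fun m =>
    if c + 1 ≤ t m then (m:ℝ) * ((((nn m) + c).choose c : ℕ) : ℝ) * βr ^ (nn m) else 0 with hu
  have hu0 : ∀ m, 0 ≤ u m := by
    intro m
    rw [hu]
    dsimp only
    split
    · positivity
    · exact le_refl 0
  have hL1 : (0:ℝ) < (L:ℝ) + 1 := by positivity
  have hrp : Tendsto (fun m : ℕ => (m:ℝ)^δ / ((L:ℝ)+1)) atTop atTop :=
    ((tendsto_rpow_atTop hδ).comp tendsto_natCast_atTop_atTop).atTop_div_const hL1
  have htt : Tendsto t atTop atTop := by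
    rw [tendsto_atTop]
    intro b
    filter_upwards [hrp.eventually_ge_atTop (b:ℝ)] with m hm
    simp only [htdef]
    exact_mod_cast le_trans hm (Nat.le_ceil _)
  have hnt : Tendsto nn atTop atTop := by
    rw [tendsto_atTop]
    intro b
    filter_upwards [htt.eventually_ge_atTop (b + c + 1)] with m hm
    simp only [hnn]
    omega
  obtain ⟨K, hK3, hK1⟩ : ∃ K : ℕ, 3/δ ≤ (K:ℝ) ∧ 1 ≤ K := by
    refine ⟨max 1 ⌈3/δ⌉₊, ?_, le_max_left _ _⟩
    calc 3/δ ≤ (⌈3/δ⌉₊:ℝ) := Nat.le_ceil _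
      _ ≤ ((max 1 ⌈3/δ⌉₊ : ℕ):ℝ) := by exact_mod_cast le_max_right _ _
  set φ : ℕ → ℝ := fun n => ((n:ℝ)+1)^(K+c) * βr^n with hφ
  have hφt : Tendsto φ atTop (nhds 0) := tendsto_poly_geo (K+c) hβr0 hβr1
  have hφ0 : ∀ n, 0 ≤ φ n := fun n => mul_nonneg (by positivity) (pow_nonneg hβr0 _)
  set C : ℝ := ((L:ℝ)+1)^K * ((c:ℝ)+2)^K * ((c:ℝ)+1)^c with hC
  have hC0 : (0:ℝ) ≤ C := by positivity
  have hbound : ∀ᶠ m : ℕ in atTop, (m:ℝ)^2 * u m ≤ C * φ (nn m) := by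
    filter_upwards [eventually_ge_atTop 1] with m hm
    rw [hu]
    dsimp only
    by_cases hcm : c + 1 ≤ t m
    · rw [if_pos hcm]
      have hm1 : (1:ℝ) ≤ (m:ℝ) := by exact_mod_cast hm
      have hmd : (m:ℝ)^δ ≤ ((L:ℝ)+1) * (t m : ℝ) := by
        have h1 : (m:ℝ)^δ / ((L:ℝ)+1) ≤ (t m : ℝ) := Nat.le_ceil _
        calc (m:ℝ)^δ = ((m:ℝ)^δ / ((L:ℝ)+1)) * ((L:ℝ)+1) := by field_simp
          _ ≤ (t m : ℝ) * ((L:ℝ)+1) := by nlinarith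
          _ = ((L:ℝ)+1) * (t m:ℝ) := mul_comm _ _
      have hone : (1:ℝ) ≤ (m:ℝ)^δ := Real.one_le_rpow hm1 hδ.le
      have htm1 : (1:ℝ) ≤ ((L:ℝ)+1) * (t m : ℝ) := le_trans hone hmd
      have hm3 : (m:ℝ)^3 ≤ ((L:ℝ)+1)^K * (t m:ℝ)^K := by
        have e1 : ((m:ℝ)^(3:ℕ) : ℝ) = ((m:ℝ)^δ)^((3:ℝ)/δ) := by
          rw [← Real.rpow_natCast (m:ℝ) 3, ← Real.rpow_mul (by positivity : (0:ℝ) ≤ (m:ℝ))]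
          congr 1
          field_simp
          norm_num
        calc (m:ℝ)^3 = ((m:ℝ)^δ)^((3:ℝ)/δ) := e1
          _ ≤ (((L:ℝ)+1) * (t m:ℝ))^((3:ℝ)/δ) :=
              Real.rpow_le_rpow (Real.rpow_nonneg (by positivity) _) hmd (by positivity)
          _ ≤ (((L:ℝ)+1) * (t m:ℝ))^((K:ℕ):ℝ) :=
              Real.rpow_le_rpow_of_exponent_le htm1 hK3
          _ = (((L:ℝ)+1) * (t m:ℝ))^(K:ℕ) := Real.rpow_natCast _ _
          _ = ((L:ℝ)+1)^K * (t m:ℝ)^K := mul_pow _ _ _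
      have hch : ((((nn m) + c).choose c : ℕ) : ℝ) ≤ ((c:ℝ)+1)^c * ((nn m:ℝ)+1)^c :=
        choose_le_poly c (nn m)
      have htm2 : (t m : ℝ) ≤ ((c:ℝ)+2) * ((nn m : ℝ)+1) := by
        have htmeq : t m = nn m + c + 1 := by simp only [hnn]; omega
        rw [htmeq]
        push_cast
        have a1 : (0:ℝ) ≤ ((nn m : ℕ) : ℝ) := Nat.cast_nonneg _
        have a2 : (0:ℝ) ≤ ((c : ℕ) : ℝ) := Nat.cast_nonneg _
        nlinarith [a1, a2]
      have htmK : (t m : ℝ)^K ≤ ((c:ℝ)+2)^K * ((nn m:ℝ)+1)^K := by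
        calc (t m : ℝ)^K ≤ (((c:ℝ)+2) * ((nn m : ℝ)+1))^K :=
              pow_le_pow_left₀ (Nat.cast_nonneg _) htm2 K
          _ = ((c:ℝ)+2)^K * ((nn m:ℝ)+1)^K := mul_pow _ _ _
      have hbpos : (0:ℝ) ≤ βr ^ (nn m) := pow_nonneg hβr0 _
      have hchpos : (0:ℝ) ≤ ((((nn m) + c).choose c : ℕ) : ℝ) := Nat.cast_nonneg _
      calc (m:ℝ)^2 * ((m:ℝ) * ((((nn m) + c).choose c : ℕ) : ℝ) * βr ^ (nn m))
          = (m:ℝ)^3 * ((((nn m) + c).choose c : ℕ) : ℝ) * βr ^ (nn m) := by ring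
        _ ≤ (((L:ℝ)+1)^K * (t m:ℝ)^K) * (((c:ℝ)+1)^c * ((nn m:ℝ)+1)^c) * βr ^ (nn m) := by
            apply mul_le_mul_of_nonneg_right _ hbpos
            apply mul_le_mul hm3 hch hchpos (by positivity)
        _ ≤ (((L:ℝ)+1)^K * (((c:ℝ)+2)^K * ((nn m:ℝ)+1)^K)) *
              (((c:ℝ)+1)^c * ((nn m:ℝ)+1)^c) * βr ^ (nn m) := by
            apply mul_le_mul_of_nonneg_right _ hbpos
            apply mul_le_mul_of_nonneg_right _ (by positivity)
            apply mul_le_mul_of_nonneg_left htmK (by positivity)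
        _ = C * φ (nn m) := by
            rw [hC, hφ]
            dsimp only
            rw [pow_add]
            ring
    · rw [if_neg hcm, mul_zero]
      exact mul_nonneg hC0 (hφ0 _)
  have hT : Tendsto (fun m : ℕ => (m:ℝ)^2 * u m) atTop (nhds 0) := by
    have hg : Tendsto (fun m : ℕ => C * φ (nn m)) atTop (nhds 0) := by
      have := (hφt.comp hnt).const_mul C
      rwa [mul_zero] at this
    exact squeeze_zero' (Filter.Eventually.of_forall fun m => mul_nonneg (by positivity) (hu0 m))
      hbound hg
  have hev : ∀ᶠ m : ℕ in atTop, u m ≤ ((m:ℝ)^2)⁻¹ := by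
    filter_upwards [hT.eventually_lt_const one_pos, eventually_ge_atTop 1] with m h1 h2
    have hm2 : (0:ℝ) < (m:ℝ)^2 := by
      have : (1:ℝ) ≤ (m:ℝ) := by exact_mod_cast h2
      positivity
    rw [← mul_le_mul_iff_of_pos_right hm2, inv_mul_cancel₀ hm2.ne']
    nlinarith
  have husum : Summable u := by
    have hg : Summable (fun m : ℕ => ((m:ℝ)^2)⁻¹) := by
      have := summable_one_div_nat_pow.mpr (by norm_num : 1 < 2)
      exact this.congr fun m => by rw [one_div]
    apply summable_of_isBigO_nat hg
    rw [Asymptotics.isBigO_iff]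
    refine ⟨1, ?_⟩
    filter_upwards [hev] with m hm
    rw [one_mul, Real.norm_eq_abs, Real.norm_eq_abs, abs_of_nonneg (hu0 m),
      abs_of_nonneg (by positivity)]
    exact hm
  set Bad : ℕ → Set Ω := fun m =>
    ⋃ j ∈ Finset.range m, {ω | ((t m : ℕ) : ℝ≥0∞) ≤ renewalIncr ξ j ω} with hBad
  set sm : ℕ → Set Ω := fun m => if c + 1 ≤ t m then Bad m else ∅ with hsm
  have hμs : ∀ m, μ (sm m) ≤ ENNReal.ofReal (u m) := by
    intro m
    rw [hsm, hu]
    dsimp only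
    by_cases hcm : c + 1 ≤ t m
    · rw [if_pos hcm, if_pos hcm]
      have htmeq : t m = nn m + c + 1 := by simp only [hnn]; omega
      calc μ (Bad m) ≤ ∑ j ∈ Finset.range m, μ {ω | ((t m : ℕ) : ℝ≥0∞) ≤ renewalIncr ξ j ω} :=
            measure_biUnion_finset_le _ _
        _ ≤ ∑ _j ∈ Finset.range m, (((nn m) + c).choose c : ℝ≥0∞) * β ^ (nn m) := by
            refine Finset.sum_le_sum fun j _ => ?_
            have hkey := key_estimate μ ξ hξ hindep hid hpos hε j (nn m)
            rw [← hc, ← hβdef] at hkey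
            have hseteq : {ω | ((t m : ℕ) : ℝ≥0∞) ≤ renewalIncr ξ j ω}
                = {ω | ((nn m + c + 1 : ℕ) : ℝ≥0∞) ≤ renewalIncr ξ j ω} := by
              rw [htmeq]
            rw [hseteq]
            exact hkey
        _ = (m:ℝ≥0∞) * ((((nn m) + c).choose c : ℝ≥0∞) * β ^ (nn m)) := by
            rw [Finset.sum_const, Finset.card_range, nsmul_eq_mul]
        _ = ENNReal.ofReal ((m:ℝ) * ((((nn m) + c).choose c : ℕ) : ℝ) * βr ^ (nn m)) := by
            rw [choose_pow_ofReal hβtop, ← ENNReal.ofReal_natCast m,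
              ← ENNReal.ofReal_mul (Nat.cast_nonneg m), mul_assoc]
    · rw [if_neg hcm, if_neg hcm]
      simp
  have hBC : ∀ᵐ ω ∂μ, ∀ᶠ m in atTop, ω ∉ sm m := by
    apply MeasureTheory.ae_eventually_notMem
    have h1 : ∑' m, μ (sm m) ≤ ∑' m, ENNReal.ofReal (u m) := ENNReal.tsum_le_tsum hμs
    have h2 : ∑' m, ENNReal.ofReal (u m) = ENNReal.ofReal (∑' m, u m) :=
      (ENNReal.ofReal_tsum_of_nonneg hu0 husum).symm
    rw [h2] at h1
    exact ne_top_of_le_ne_top ENNReal.ofReal_ne_top h1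
  filter_upwards [hBC] with ω hω
  have hev2 : ∀ᶠ m : ℕ in atTop, c + 1 ≤ t m := htt.eventually_ge_atTop (c+1)
  filter_upwards [hω, hev2] with m h1 h2
  intro j hj
  by_contra hcon
  push_neg at hcon
  apply h1
  rw [hsm]
  dsimp only
  rw [if_pos h2]
  exact Set.mem_biUnion (Finset.mem_range.mpr hj) hcon

end BC

theorem stmt_16 {Ω : Type*} [MeasurableSpace Ω] (μ : Measure Ω) [IsProbabilityMeasure μ]
    (ξ η : ℕ → Ω → ℝ) (hmeas : ∀ i, Measurable (fun ω => (ξ i ω, η i ω)))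
    (hpos : ∀ i, ∀ᵐ ω ∂μ, 0 < ξ i ω ∧ 0 < η i ω)
    (hindep : iIndepFun (fun i ω => (ξ i ω, η i ω)) μ)
    (hid : ∀ i, IdentDistrib (fun ω => (ξ i ω, η i ω)) (fun ω => (ξ 0 ω, η 0 ω)) μ μ)
    (F : ℝ → ℝ) (hF : ∀ x, F x = (μ {ω | η 0 ω ≤ x}).toReal) :
    (∀ᵐ ω ∂μ, ∀ m : ℕ, ∀ hm : 1 ≤ m,
      prwJ ξ F m ω ≤ 1 + 2 * (Finset.range m).sup'
        (Finset.nonempty_range_iff.mpr (Nat.one_le_iff_ne_zero.mp hm))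
        (fun k => (renewalIncr ξ k ω).toReal)) ∧
    (∀ δ : ℝ, 0 < δ → ∀ᵐ ω ∂μ, Tendsto
      (fun m : ℕ => (m : ℝ) ^ (-δ) * prwJ ξ F m ω) atTop (nhds 0)) := by
  have hξmeas : ∀ i, Measurable (ξ i) := fun i => (hmeas i).fst
  have hindep' : iIndepFun ξ μ :=
    hindep.comp (fun _ => Prod.fst) (fun _ => measurable_fst)
  have hid' : ∀ i, IdentDistrib (ξ i) (ξ 0) μ μ := fun i => (hid i).comp measurable_fst
  have hposξ : ∀ᵐ ω ∂μ, ∀ i, 0 < ξ i ω := ae_all_iff.mpr fun i => (hpos i).mono fun ω h => h.1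
  have hFmono : Monotone F := by
    intro x y hxy
    rw [hF x, hF y]
    exact ENNReal.toReal_mono (measure_ne_top μ _)
      (measure_mono fun ω hω => le_trans hω hxy)
  have hF0 : ∀ x, 0 ≤ F x := fun x => by rw [hF x]; exact ENNReal.toReal_nonneg
  have hF1 : ∀ x, F x ≤ 1 := fun x => by
    rw [hF x]
    calc (μ _).toReal ≤ (1:ℝ≥0∞).toReal :=
          ENNReal.toReal_mono ENNReal.one_ne_top prob_le_one
      _ = 1 := ENNReal.toReal_one
  obtain ⟨ε, hε, hβ⟩ := exists_eps μ (ξ 0) (hξmeas 0) ((hpos 0).mono fun ω h => h.1)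
  constructor
  · filter_upwards [hposξ, ae_finite_renewal μ ξ hξmeas hindep' hid' hposξ hε hβ] with ω h1 h2
    intro m hm
    exact det_part1 ξ F hFmono hF0 hF1 ω h1 h2 m hm _
  · intro δ hδ
    filter_upwards [hposξ, ae_finite_renewal μ ξ hξmeas hindep' hid' hposξ hε hβ,
      ae_all_iff.mpr
        (fun L : ℕ => ae_eventually_small μ ξ hξmeas hindep' hid' hposξ hε hβ hδ L)]
      with ω h1 h2 h3
    rw [NormedAddCommGroup.tendsto_nhds_zero]
    intro ep hep
    obtain ⟨L, hL'⟩ := exists_nat_one_div_lt (by positivity : (0:ℝ) < ep/3)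
    have hL : 3/((L:ℝ)+1) < ep := by
      rw [div_lt_iff₀ (by positivity : (0:ℝ) < (L:ℝ)+1)]
      rw [div_lt_iff₀ (by positivity : (0:ℝ) < (L:ℝ)+1)] at hL'
      linarith
    have hrneg : Tendsto (fun m : ℕ => (m:ℝ)^(-δ)) atTop (nhds 0) :=
      (tendsto_rpow_neg_atTop hδ).comp tendsto_natCast_atTop_atTop
    have hev5 : ∀ᶠ m : ℕ in atTop, 3*(m:ℝ)^(-δ) < 1/((L:ℝ)+1) := by
      have h35 := hrneg.eventually_lt_const
        (by positivity : (0:ℝ) < 1/(3*((L:ℝ)+1)))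
      filter_upwards [h35] with m hm
      rw [lt_div_iff₀ (by positivity : (0:ℝ) < 3*((L:ℝ)+1))] at hm
      rw [lt_div_iff₀ (by positivity : (0:ℝ) < (L:ℝ)+1)]
      linarith
    filter_upwards [h3 L, hev5, eventually_ge_atTop 1] with m hm1 hm5 hm6
    have hm1R : (1:ℝ) ≤ (m:ℝ) := by exact_mod_cast hm6
    have hmpos : (0:ℝ) < (m:ℝ) := by linarith
    have hne : (Finset.range m).Nonempty :=
      Finset.nonempty_range_iff.mpr (Nat.one_le_iff_ne_zero.mp hm6)
    have hJ : prwJ ξ F m ω ≤ 1 + 2 * (Finset.range m).sup' hne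
        (fun k => (renewalIncr ξ k ω).toReal) :=
      det_part1 ξ F hFmono hF0 hF1 ω h1 h2 m hm6 hne
    set tm : ℕ := ⌈(m:ℝ)^δ / ((L:ℝ)+1)⌉₊ with htm
    have hsup : (Finset.range m).sup' hne (fun k => (renewalIncr ξ k ω).toReal)
        ≤ (m:ℝ)^δ/((L:ℝ)+1) + 1 := by
      apply Finset.sup'_le
      intro j hj
      have hlt := hm1 j (Finset.mem_range.mp hj)
      have hxne : renewalIncr ξ j ω ≠ ∞ :=
        ne_top_of_lt (lt_of_lt_of_le hlt (le_of_lt (ENNReal.natCast_lt_top _)))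
      have h1' : (renewalIncr ξ j ω).toReal ≤ ((tm : ℕ) : ℝ) := by
        have := (ENNReal.toReal_le_toReal hxne (ENNReal.natCast_ne_top _)).mpr hlt.le
        rwa [ENNReal.toReal_natCast] at this
      have h2' : ((tm : ℕ) : ℝ) < (m:ℝ)^δ/((L:ℝ)+1) + 1 :=
        Nat.ceil_lt_add_one (by positivity)
      linarith
    have hmul : (m:ℝ)^(-δ) * (m:ℝ)^δ = 1 := by
      rw [← Real.rpow_add hmpos]
      simp
    have hprw0 : 0 ≤ prwJ ξ F m ω := prwJ_nonneg ξ F hFmono m ω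
    have hrpow0 : (0:ℝ) ≤ (m:ℝ)^(-δ) := Real.rpow_nonneg (by positivity) _
    calc ‖(m:ℝ)^(-δ) * prwJ ξ F m ω‖ = (m:ℝ)^(-δ) * prwJ ξ F m ω := by
          rw [Real.norm_eq_abs, abs_of_nonneg (mul_nonneg hrpow0 hprw0)]
      _ ≤ (m:ℝ)^(-δ) * (3 + 2*((m:ℝ)^δ/((L:ℝ)+1))) := by
          apply mul_le_mul_of_nonneg_left _ hrpow0
          linarith
      _ = 3*(m:ℝ)^(-δ) + ((m:ℝ)^(-δ)*(m:ℝ)^δ)*(2/((L:ℝ)+1)) := by ring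
      _ = 3*(m:ℝ)^(-δ) + 2/((L:ℝ)+1) := by rw [hmul]; ring
      _ < 1/((L:ℝ)+1) + 2/((L:ℝ)+1) := by linarith
      _ = 3/((L:ℝ)+1) := by ring
      _ < ep := hL
end

section
/- Let (ξ_k, η_k) be i.i.d. with positive components, Sₙ = ξ₁ + ⋯ + ξₙ, F(x) = P(η ≤ x), and ν as above. Then for every δ > 0, almost surely m^{-δ} · Σ_{k≥0} (F(m+1−S_k)·1{S_k ≤ m+1} − F(m−S_k)·1{S_k ≤ m}) → 0 as integer m → ∞. -/
open MeasureTheory ProbabilityTheory Filter Real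
open scoped ENNReal

/-- `∑_{k≥0} (F(m+1−S_k)·1{S_k ≤ m+1} − F(m−S_k)·1{S_k ≤ m})`. -/
noncomputable def prwFdiff {Ω : Type*} (ξ : ℕ → Ω → ℝ) (F : ℝ → ℝ) (m : ℕ) (ω : Ω) : ℝ :=
  ∑' k : ℕ,
    ((if partialSum ξ k ω ≤ (m : ℝ) + 1 then F ((m : ℝ) + 1 - partialSum ξ k ω) else 0)
      - (if partialSum ξ k ω ≤ (m : ℝ) then F ((m : ℝ) - partialSum ξ k ω) else 0))

section aux
variable {Ω : Type*} [MeasurableSpace Ω] (μ : Measure Ω) [IsProbabilityMeasure μ]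
    (ξ η : ℕ → Ω → ℝ)

lemma aux_inter (hindep : iIndepFun (fun i ω => (ξ i ω, η i ω)) μ)
    (hid : ∀ i, IdentDistrib (fun ω => (ξ i ω, η i ω)) (fun ω => (ξ 0 ω, η 0 ω)) μ μ)
    (c : ℝ) (T : Finset ℕ) :
    μ (⋂ i ∈ T, {ω | ξ i ω ≤ c}) = (μ {ω | ξ 0 ω ≤ c}) ^ T.card := by
  have h1 : μ (⋂ i ∈ T, {ω | ξ i ω ≤ c}) = ∏ i ∈ T, μ {ω | ξ i ω ≤ c} := by
    refine hindep.meas_biInter (fun i _ => ?_)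
    exact ⟨{p : ℝ × ℝ | p.1 ≤ c}, measurableSet_le measurable_fst measurable_const, rfl⟩
  have h2 : ∀ i, μ {ω | ξ i ω ≤ c} = μ {ω | ξ 0 ω ≤ c} := by
    intro i
    have hξ : IdentDistrib (ξ i) (ξ 0) μ μ := (hid i).comp measurable_fst
    have := hξ.measure_mem_eq (s := Set.Iic c) measurableSet_Iic
    simpa [Set.preimage] using this
  rw [h1, Finset.prod_congr rfl (fun i _ => h2 i), Finset.prod_const]
end aux

section key
variable {Ω : Type*} [MeasurableSpace Ω] {μ : Measure Ω} [IsProbabilityMeasure μ]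
    {ξ η : ℕ → Ω → ℝ}

lemma key_bound (hindep : iIndepFun (fun i ω => (ξ i ω, η i ω)) μ)
    (hid : ∀ i, IdentDistrib (fun ω => (ξ i ω, η i ω)) (fun ω => (ξ 0 ω, η 0 ω)) μ μ)
    {c : ℝ} (hc : 0 < c) (s : Finset ℕ) {x : ℝ} :
    μ {ω | (∀ i ∈ s, 0 < ξ i ω) ∧ ∑ i ∈ s, ξ i ω ≤ x}
      ≤ 2 ^ s.card * (μ {ω | ξ 0 ω ≤ c}) ^ (s.card - ⌈x / c⌉₊) := by
  classical
  set b := ⌈x / c⌉₊ with hb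
  set r := s.card - b with hr
  -- event is contained in the union over subsets T of size r
  have hsub : {ω | (∀ i ∈ s, 0 < ξ i ω) ∧ ∑ i ∈ s, ξ i ω ≤ x}
      ⊆ ⋃ T ∈ s.powersetCard r, ⋂ i ∈ T, {ω | ξ i ω ≤ c} := by
    intro ω hω
    obtain ⟨hpos, hsum⟩ := hω
    set T₀ := s.filter (fun i => ξ i ω ≤ c) with hT₀
    have hT₀s : T₀ ⊆ s := Finset.filter_subset _ _
    have hcard : r ≤ T₀.card := by
      -- the complement has at most b elements
      have hu : (s \ T₀).card ≤ b := by
        by_contra h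
        push_neg at h
        -- each element of s \ T₀ has ξ i ω > c
        have hgt : ∀ i ∈ s \ T₀, c ≤ ξ i ω := by
          intro i hi
          rw [Finset.mem_sdiff, hT₀, Finset.mem_filter] at hi
          have := hi.2
          push_neg at this
          exact le_of_lt (this hi.1)
        have h1 : ((s \ T₀).card : ℝ) * c ≤ ∑ i ∈ s \ T₀, ξ i ω := by
          calc ((s \ T₀).card : ℝ) * c = ∑ _i ∈ s \ T₀, c := by
                rw [Finset.sum_const, nsmul_eq_mul]
            _ ≤ ∑ i ∈ s \ T₀, ξ i ω := Finset.sum_le_sum hgt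
        have h2 : ∑ i ∈ s \ T₀, ξ i ω ≤ ∑ i ∈ s, ξ i ω := by
          refine Finset.sum_le_sum_of_subset_of_nonneg (Finset.sdiff_subset) ?_
          intro i hi _; exact le_of_lt (hpos i hi)
        have h3 : ((s \ T₀).card : ℝ) ≤ x / c := by
          rw [le_div_iff₀ hc]; linarith
        have h4 : ((s \ T₀).card : ℝ) ≤ (b : ℝ) := h3.trans (Nat.le_ceil _)
        exact absurd (Nat.cast_le.mp h4) (not_le.mpr h)
      have : s.card - T₀.card ≤ b := by
        have := Finset.card_sdiff_add_card_eq_card hT₀s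
        omega
      omega
    obtain ⟨T, hTsub, hTcard⟩ := Finset.exists_subset_card_eq hcard
    refine Set.mem_iUnion₂.mpr ⟨T, ?_, ?_⟩
    · exact Finset.mem_powersetCard.mpr ⟨hTsub.trans hT₀s, hTcard⟩
    · refine Set.mem_iInter₂.mpr (fun i hi => ?_)
      have := hTsub hi
      rw [hT₀, Finset.mem_filter] at this
      exact this.2
  calc μ {ω | (∀ i ∈ s, 0 < ξ i ω) ∧ ∑ i ∈ s, ξ i ω ≤ x}
      ≤ μ (⋃ T ∈ s.powersetCard r, ⋂ i ∈ T, {ω | ξ i ω ≤ c}) := measure_mono hsub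
    _ ≤ ∑ T ∈ s.powersetCard r, μ (⋂ i ∈ T, {ω | ξ i ω ≤ c}) := measure_biUnion_finset_le _ _
    _ = ∑ T ∈ s.powersetCard r, (μ {ω | ξ 0 ω ≤ c}) ^ T.card := by
        refine Finset.sum_congr rfl (fun T hT => ?_)
        exact aux_inter μ ξ η hindep hid c T
    _ = (s.powersetCard r).card • (μ {ω | ξ 0 ω ≤ c}) ^ r := by
        rw [← Finset.sum_const]
        refine Finset.sum_congr rfl (fun T hT => ?_)
        rw [(Finset.mem_powersetCard.mp hT).2]
    _ ≤ 2 ^ s.card * (μ {ω | ξ 0 ω ≤ c}) ^ r := by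
        rw [Finset.card_powersetCard, nsmul_eq_mul]
        refine mul_le_mul_left ?_ _
        have hch : s.card.choose r ≤ 2 ^ s.card := by
          calc s.card.choose r ≤ ∑ m ∈ Finset.range (s.card + 1), s.card.choose m := by
                rcases le_or_gt r s.card with h | h
                · exact Finset.single_le_sum (f := fun m => s.card.choose m)
                    (fun i _ => Nat.zero_le _) (Finset.mem_range.mpr (Nat.lt_succ_of_le h))
                · simp [Nat.choose_eq_zero_of_lt h]
            _ = 2 ^ s.card := Nat.sum_range_choose s.card
        calc (↑(s.card.choose r) : ℝ≥0∞) ≤ ↑(2 ^ s.card : ℕ) := Nat.cast_le.mpr hch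
          _ = 2 ^ s.card := by push_cast; ring
end key

lemma ennpow_aux {A B C : ℕ} (h : A + C ≤ B) :
    (2 : ℝ≥0∞) ^ A * ((2 : ℝ≥0∞)⁻¹) ^ B ≤ ((2 : ℝ≥0∞)⁻¹) ^ C := by
  have h2 : (2 : ℝ≥0∞) * (2 : ℝ≥0∞)⁻¹ = 1 := ENNReal.mul_inv_cancel (by norm_num) (by norm_num)
  calc (2 : ℝ≥0∞) ^ A * ((2 : ℝ≥0∞)⁻¹) ^ B
      ≤ (2 : ℝ≥0∞) ^ A * ((2 : ℝ≥0∞)⁻¹) ^ (A + C) := by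
        exact mul_le_mul_right (pow_le_pow_of_le_one zero_le
          (ENNReal.inv_le_one.mpr one_le_two) h) _
    _ = ((2 : ℝ≥0∞) * (2 : ℝ≥0∞)⁻¹) ^ A * ((2 : ℝ≥0∞)⁻¹) ^ C := by
        rw [pow_add, mul_pow]; ring
    _ = ((2 : ℝ≥0∞)⁻¹) ^ C := by rw [h2]; simp

lemma exp_pow_aux {y : ℝ} (hy : 0 ≤ y) (k : ℕ) (hk : 1 ≤ k) : (y / k) ^ k ≤ Real.exp y := by
  have hk0 : (0:ℝ) < k := by positivity
  have h1 : (y / k) ^ k ≤ (1 + y / k) ^ k := by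
    refine pow_le_pow_left₀ (by positivity) ?_ _
    linarith
  refine h1.trans ?_
  have h2 : (1 + y / k) ^ k ≤ Real.exp (y / k) ^ k := by
    refine pow_le_pow_left₀ (by positivity) ?_ _
    have := Real.add_one_le_exp (y / k)
    linarith
  refine h2.trans ?_
  rw [← Real.exp_nat_mul]
  rw [mul_div_cancel₀]
  · positivity

lemma summable_aux {a δ : ℝ} (ha : 0 < a) (hδ : 0 < δ) :
    Summable (fun j : ℕ => ((j : ℝ) + 1) * Real.exp (-(a * (j : ℝ) ^ δ))) := by
  set k : ℕ := ⌈4 / δ⌉₊ + 1 with hk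
  have hk1 : 1 ≤ k := by omega
  have hk4 : 4 ≤ δ * k := by
    have h1 : 4 / δ ≤ (k : ℝ) := by
      calc 4 / δ ≤ (⌈4 / δ⌉₊ : ℝ) := Nat.le_ceil _
        _ ≤ (k : ℝ) := by exact_mod_cast Nat.le_succ _
    calc (4:ℝ) = δ * (4 / δ) := by field_simp
      _ ≤ δ * k := by nlinarith
  have hak : (0:ℝ) < (a / k) ^ k := by positivity
  refine summable_of_isBigO_nat (Real.summable_one_div_nat_pow.mpr (by norm_num : 1 < 2)) ?_
  refine Asymptotics.IsBigO.of_bound 1 ?_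
  filter_upwards [eventually_ge_atTop (⌈2 / (a / k) ^ k⌉₊ + 1)] with j hj
  have hj1 : (1:ℝ) ≤ (j:ℝ) := by exact_mod_cast Nat.one_le_iff_ne_zero.mpr (by omega)
  have hjJ : 2 / (a / k) ^ k ≤ (j:ℝ) := by
    calc 2 / (a / k) ^ k ≤ (⌈2 / (a / k) ^ k⌉₊ : ℝ) := Nat.le_ceil _
      _ ≤ (j:ℝ) := by exact_mod_cast by omega
  have hexp : ((j:ℝ) + 1) * (j:ℝ) ^ 2 ≤ Real.exp (a * (j:ℝ) ^ δ) := by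
    have h0 : (0:ℝ) ≤ a * (j:ℝ) ^ δ := by positivity
    have h1 : (a * (j:ℝ) ^ δ / k) ^ k ≤ Real.exp (a * (j:ℝ) ^ δ) := exp_pow_aux h0 k hk1
    have h2 : (a * (j:ℝ) ^ δ / k) ^ k = (a / k) ^ k * ((j:ℝ) ^ δ) ^ k := by
      rw [← mul_pow]; ring_nf
    have h3 : ((j:ℝ) ^ δ) ^ k = (j:ℝ) ^ (δ * k) := by
      rw [← Real.rpow_natCast ((j:ℝ) ^ δ) k, ← Real.rpow_mul (by positivity)]
    have h4 : (j:ℝ) ^ (4:ℝ) ≤ (j:ℝ) ^ (δ * k) :=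
      Real.rpow_le_rpow_of_exponent_le hj1 hk4
    have h5 : ((j:ℝ) + 1) * (j:ℝ) ^ 2 ≤ (a / k) ^ k * (j:ℝ) ^ (4:ℝ) := by
      have h6 : (j:ℝ) ^ (4:ℝ) = (j:ℝ) ^ (4:ℕ) := by
        rw [← Real.rpow_natCast (j:ℝ) 4]; norm_num
      rw [h6]
      have h7 : (2:ℝ) ≤ (a / k) ^ k * (j:ℝ) := by
        rw [div_le_iff₀ hak] at hjJ
        linarith [hjJ]
      have h8 : ((j:ℝ)) ^ 2 ≤ ((j:ℝ)) ^ 3 := by nlinarith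
      have h9 : (2:ℝ) * (j:ℝ)^3 ≤ ((a / k) ^ k * (j:ℝ)) * (j:ℝ)^3 :=
        mul_le_mul_of_nonneg_right h7 (by positivity)
      nlinarith [h8, h9]
    calc ((j:ℝ) + 1) * (j:ℝ) ^ 2 ≤ (a / k) ^ k * (j:ℝ) ^ (δ * k) := by
          refine h5.trans ?_
          exact mul_le_mul_of_nonneg_left h4 (le_of_lt hak)
      _ = (a * (j:ℝ) ^ δ / k) ^ k := by rw [h2, h3]
      _ ≤ Real.exp (a * (j:ℝ) ^ δ) := h1
  have hjpos : (0:ℝ) < (j:ℝ) ^ 2 := by positivity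
  rw [Real.norm_eq_abs, Real.norm_eq_abs]
  rw [abs_of_nonneg (by positivity), abs_of_nonneg (by positivity)]
  rw [one_mul, Real.exp_neg, le_div_iff₀ hjpos]
  calc ((j:ℝ) + 1) * (Real.exp (a * (j:ℝ) ^ δ))⁻¹ * (j:ℝ) ^ 2
      = (((j:ℝ) + 1) * (j:ℝ) ^ 2) * (Real.exp (a * (j:ℝ) ^ δ))⁻¹ := by ring
    _ ≤ Real.exp (a * (j:ℝ) ^ δ) * (Real.exp (a * (j:ℝ) ^ δ))⁻¹ :=
        mul_le_mul_of_nonneg_right hexp (by positivity)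
    _ = 1 := by rw [mul_inv_cancel₀ (Real.exp_ne_zero _)]

lemma telescope_aux (F : ℝ → ℝ) (h0 : ∀ x, 0 ≤ F x) (h1 : ∀ x, F x ≤ 1) (m : ℕ) :
    ∑ j ∈ Finset.range (m+1), (F ((m:ℝ)+2-(j:ℝ)) - F ((m:ℝ)-(j:ℝ))) ≤ 2 := by
  have hre : ∑ j ∈ Finset.range (m+1), (F ((m:ℝ)+2-(j:ℝ)) - F ((m:ℝ)-(j:ℝ)))
      = ∑ j ∈ Finset.range (m+1), (F ((j:ℝ)+2) - F ((j:ℝ))) := by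
    rw [← Finset.sum_range_reflect (fun j => F ((j:ℝ)+2) - F ((j:ℝ))) (m+1)]
    refine Finset.sum_congr rfl (fun j hj => ?_)
    have hj' : j ≤ m := Nat.lt_succ_iff.mp (Finset.mem_range.mp hj)
    have h2 : m + 1 - 1 - j = m - j := by omega
    have h3 : ((m - j:ℕ):ℝ) = (m:ℝ) - (j:ℝ) := by rw [Nat.cast_sub hj']
    have e1 : (m:ℝ)+2-(j:ℝ) = ((m:ℝ)-(j:ℝ))+2 := by ring
    rw [h2, h3, e1]
  rw [hre]
  have hsplit : ∀ j:ℕ, F ((j:ℝ)+2) - F ((j:ℝ))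
      = (F ((j:ℝ)+2) - F ((j:ℝ)+1)) + (F ((j:ℝ)+1) - F ((j:ℝ))) := fun j => by ring
  rw [Finset.sum_congr rfl (fun j _ => hsplit j), Finset.sum_add_distrib]
  have t1 : ∑ j ∈ Finset.range (m+1), (F ((j:ℝ)+2) - F ((j:ℝ)+1))
      = F (((m+1:ℕ):ℝ)+1) - F (((0:ℕ):ℝ)+1) := by
    rw [← Finset.sum_range_sub (fun i => F ((i:ℝ)+1)) (m+1)]
    refine Finset.sum_congr rfl (fun j _ => ?_)
    have : (((j+1:ℕ)):ℝ)+1 = (j:ℝ)+2 := by push_cast; ring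
    rw [this]
  have t2 : ∑ j ∈ Finset.range (m+1), (F ((j:ℝ)+1) - F ((j:ℝ)))
      = F (((m+1:ℕ):ℝ)) - F (((0:ℕ):ℝ)) := by
    rw [← Finset.sum_range_sub (fun i => F ((i:ℝ))) (m+1)]
    refine Finset.sum_congr rfl (fun j _ => ?_)
    have : (((j+1:ℕ)):ℝ) = (j:ℝ)+1 := by push_cast; ring
    rw [this]
  rw [t1, t2]
  have := h1 (((m+1:ℕ):ℝ)+1)
  have := h1 (((m+1:ℕ):ℝ))
  have := h0 (((0:ℕ):ℝ)+1)
  have := h0 (((0:ℕ):ℝ))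
  linarith
set_option maxHeartbeats 2000000 in
theorem stmt_17 {Ω : Type*} [MeasurableSpace Ω] (μ : Measure Ω) [IsProbabilityMeasure μ]
    (ξ η : ℕ → Ω → ℝ) (hmeas : ∀ i, Measurable (fun ω => (ξ i ω, η i ω)))
    (hpos : ∀ i, ∀ᵐ ω ∂μ, 0 < ξ i ω ∧ 0 < η i ω)
    (hindep : iIndepFun (fun i ω => (ξ i ω, η i ω)) μ)
    (hid : ∀ i, IdentDistrib (fun ω => (ξ i ω, η i ω)) (fun ω => (ξ 0 ω, η 0 ω)) μ μ)
    (F : ℝ → ℝ) (hF : ∀ x, F x = (μ {ω | η 0 ω ≤ x}).toReal)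
    (δ : ℝ) (hδ : 0 < δ) :
    ∀ᵐ ω ∂μ, Tendsto
      (fun m : ℕ => (m : ℝ) ^ (-δ) * prwFdiff ξ F m ω) atTop (nhds 0) := by
  classical
  -- measurability of ξ 0
  have hmξ0 : Measurable (ξ 0) := (hmeas 0).fst
  -- step 1 : choice of c with 0 < c and μ {ξ 0 ≤ c} ≤ (2⁻¹)^4
  obtain ⟨c, hc, hθ⟩ : ∃ c : ℝ, 0 < c ∧ μ {ω | ξ 0 ω ≤ c} ≤ ((2:ℝ≥0∞)⁻¹) ^ 4 := by
    have hmeasset : ∀ n : ℕ, MeasurableSet {ω | ξ 0 ω ≤ 1 / ((n:ℝ) + 1)} :=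
      fun n => measurableSet_le hmξ0 measurable_const
    have hanti : Antitone (fun n : ℕ => {ω | ξ 0 ω ≤ 1 / ((n:ℝ) + 1)}) := by
      intro a b hab ω hω
      have h1 : (1:ℝ) / ((b:ℝ) + 1) ≤ 1 / ((a:ℝ) + 1) := by
        apply one_div_le_one_div_of_le (by positivity)
        exact_mod_cast by omega
      exact le_trans hω h1
    have htend := tendsto_measure_iInter_atTop (μ := μ)
      (fun n => (hmeasset n).nullMeasurableSet) hanti ⟨0, measure_ne_top μ _⟩
    have hInter : μ (⋂ n : ℕ, {ω | ξ 0 ω ≤ 1 / ((n:ℝ) + 1)}) = 0 := by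
      have hsub : (⋂ n : ℕ, {ω | ξ 0 ω ≤ 1 / ((n:ℝ) + 1)}) ⊆ {ω | ¬ (0 < ξ 0 ω)} := by
        intro ω hω
        simp only [Set.mem_iInter, Set.mem_setOf_eq] at hω ⊢
        intro hcon
        obtain ⟨n, hn⟩ := exists_nat_one_div_lt hcon
        exact absurd (hω n) (not_le.mpr hn)
      refine measure_mono_null hsub ?_
      have h0 : ∀ᵐ ω ∂μ, 0 < ξ 0 ω := (hpos 0).mono (fun ω h => h.1)
      exact h0
    rw [hInter] at htend
    have hev : ∀ᶠ n : ℕ in atTop, μ {ω | ξ 0 ω ≤ 1 / ((n:ℝ) + 1)} < ((2:ℝ≥0∞)⁻¹) ^ 4 := by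
      refine htend.eventually_lt_const ?_
      exact ENNReal.pow_pos (ENNReal.inv_pos.mpr (by norm_num)) 4
    obtain ⟨n, hn⟩ := hev.exists
    exact ⟨1 / ((n:ℝ) + 1), by positivity, le_of_lt hn⟩
  set θ : ℝ≥0∞ := μ {ω | ξ 0 ω ≤ c} with hθdef
  set t : ℝ≥0∞ := (2:ℝ≥0∞)⁻¹ with htdef
  -- constants
  set b₁ : ℕ := ⌈(1:ℝ) / c⌉₊ with hb₁
  set K : ℕ → ℕ := fun j => 2 * ⌈(j:ℝ) / c⌉₊ + 2 * j + 2 with hK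
  set nn : ℕ → ℕ → ℕ := fun r j => ⌈(j:ℝ) ^ δ / ((r:ℝ) + 1)⌉₊ + 1 with hnn
  set BAD : ℕ → ℕ → Set Ω := fun r j =>
    {ω | (∀ i, 0 < ξ i ω) ∧ (partialSum ξ (K j) ω ≤ (j:ℝ) ∨
      ∃ k₀ < K j, ∑ i ∈ Finset.Ico k₀ (k₀ + (nn r j - 1)), ξ i ω ≤ 1)} with hBAD
  -- measure bound for BAD r j when nn r j is large
  have hmeasBAD : ∀ r j : ℕ, 2 * b₁ + 2 ≤ nn r j →
      μ (BAD r j) ≤ t ^ j + (K j) * t ^ (nn r j) := by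
    intro r j hlarge
    set q : ℕ := nn r j - 1 with hq
    have hsubset : BAD r j ⊆
        ({ω | (∀ i ∈ Finset.range (K j), 0 < ξ i ω) ∧ ∑ i ∈ Finset.range (K j), ξ i ω ≤ (j:ℝ)}
        ∪ ⋃ k₀ ∈ Finset.range (K j),
          {ω | (∀ i ∈ Finset.Ico k₀ (k₀ + q), 0 < ξ i ω) ∧ ∑ i ∈ Finset.Ico k₀ (k₀ + q), ξ i ω ≤ 1}) := by
      intro ω hω
      obtain ⟨hp, hd⟩ := hω
      rcases hd with h1 | ⟨k₀, hk₀, h2⟩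
      · exact Or.inl ⟨fun i _ => hp i, h1⟩
      · refine Or.inr (Set.mem_biUnion (Finset.mem_range.mpr hk₀) ?_)
        exact ⟨fun i _ => hp i, h2⟩
    have hE1 : μ {ω | (∀ i ∈ Finset.range (K j), 0 < ξ i ω) ∧
        ∑ i ∈ Finset.range (K j), ξ i ω ≤ (j:ℝ)} ≤ t ^ j := by
      have h1 := key_bound hindep hid hc (Finset.range (K j)) (x := (j:ℝ))
      rw [Finset.card_range] at h1
      refine h1.trans ?_
      have hθ4 : θ ^ (K j - ⌈(j:ℝ)/c⌉₊) ≤ (t ^ 4) ^ (K j - ⌈(j:ℝ)/c⌉₊) :=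
        pow_le_pow_left₀ zero_le hθ _
      calc (2:ℝ≥0∞) ^ (K j) * θ ^ (K j - ⌈(j:ℝ)/c⌉₊)
          ≤ (2:ℝ≥0∞) ^ (K j) * t ^ (4 * (K j - ⌈(j:ℝ)/c⌉₊)) := by
            rw [pow_mul]; exact mul_le_mul_right hθ4 _
        _ ≤ t ^ j := by
            refine ennpow_aux ?_
            have hKj : K j = 2 * ⌈(j:ℝ)/c⌉₊ + 2 * j + 2 := rfl
            omega
    have hE2 : ∀ k₀ : ℕ, μ {ω | (∀ i ∈ Finset.Ico k₀ (k₀ + q), 0 < ξ i ω) ∧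
        ∑ i ∈ Finset.Ico k₀ (k₀ + q), ξ i ω ≤ 1} ≤ t ^ (nn r j) := by
      intro k₀
      have h1 := key_bound hindep hid hc (Finset.Ico k₀ (k₀ + q)) (x := (1:ℝ))
      rw [Nat.card_Ico] at h1
      have hcard : k₀ + q - k₀ = q := by omega
      rw [hcard] at h1
      refine h1.trans ?_
      have hθ4 : θ ^ (q - ⌈(1:ℝ)/c⌉₊) ≤ (t ^ 4) ^ (q - ⌈(1:ℝ)/c⌉₊) :=
        pow_le_pow_left₀ zero_le hθ _
      calc (2:ℝ≥0∞) ^ q * θ ^ (q - ⌈(1:ℝ)/c⌉₊)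
          ≤ (2:ℝ≥0∞) ^ q * t ^ (4 * (q - ⌈(1:ℝ)/c⌉₊)) := by
            rw [pow_mul]; exact mul_le_mul_right hθ4 _
        _ ≤ t ^ (nn r j) := by
            refine ennpow_aux ?_
            have hb₁' : b₁ = ⌈(1:ℝ)/c⌉₊ := rfl
            omega
    calc μ (BAD r j) ≤ _ := measure_mono hsubset
      _ ≤ μ {ω | (∀ i ∈ Finset.range (K j), 0 < ξ i ω) ∧ ∑ i ∈ Finset.range (K j), ξ i ω ≤ (j:ℝ)}
          + μ (⋃ k₀ ∈ Finset.range (K j),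
          {ω | (∀ i ∈ Finset.Ico k₀ (k₀ + q), 0 < ξ i ω) ∧ ∑ i ∈ Finset.Ico k₀ (k₀ + q), ξ i ω ≤ 1}) :=
          measure_union_le _ _
      _ ≤ t ^ j + (K j) * t ^ (nn r j) := by
          refine add_le_add hE1 ?_
          calc μ (⋃ k₀ ∈ Finset.range (K j), _) ≤ ∑ k₀ ∈ Finset.range (K j), μ _ :=
                measure_biUnion_finset_le _ _
            _ ≤ ∑ _k₀ ∈ Finset.range (K j), t ^ (nn r j) := Finset.sum_le_sum (fun k₀ _ => hE2 k₀)
            _ = (K j) * t ^ (nn r j) := by rw [Finset.sum_const, Finset.card_range, nsmul_eq_mul]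
  -- Borel–Cantelli for the bad events
  have hBC : ∀ r : ℕ, ∀ᵐ ω ∂μ, ∀ᶠ j in atTop, ω ∉ BAD r j := by
    intro r
    obtain ⟨J₀, hJ₀⟩ : ∃ J₀ : ℕ, ∀ j, J₀ ≤ j → 2 * b₁ + 2 ≤ nn r j := by
      have hten : Tendsto (fun j : ℕ => (j:ℝ) ^ δ) atTop atTop :=
        (tendsto_rpow_atTop hδ).comp tendsto_natCast_atTop_atTop
      have h2 : ∀ᶠ j : ℕ in atTop, (((2*b₁+2 : ℕ):ℝ) * ((r:ℝ)+1) : ℝ) ≤ (j:ℝ)^δ :=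
        hten.eventually_ge_atTop _
      obtain ⟨J₀, hJ⟩ := eventually_atTop.mp h2
      refine ⟨J₀, fun j hj => ?_⟩
      have h5 := hJ j hj
      have hrpos : (0:ℝ) < (r:ℝ)+1 := by positivity
      have h3 : ((2*b₁+2 : ℕ):ℝ) ≤ (j:ℝ)^δ / ((r:ℝ)+1) := by
        rw [le_div_iff₀ hrpos]; linarith
      have h4 : (2*b₁+2 : ℕ) ≤ ⌈(j:ℝ)^δ / ((r:ℝ)+1)⌉₊ :=
        Nat.cast_le.mp (h3.trans (Nat.le_ceil _))
      have : nn r j = ⌈(j:ℝ)^δ / ((r:ℝ)+1)⌉₊ + 1 := rfl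
      omega
    set a : ℝ := Real.log 2 / ((r:ℝ)+1) with ha
    have ha0 : 0 < a := div_pos (Real.log_pos one_lt_two) (by positivity)
    set β : ℝ := 2 / c + 6 with hβ
    have hβ0 : 0 < β := by positivity
    set G : ℕ → ℝ := fun j => (1/2:ℝ)^j + β * (((j:ℝ)+1) * Real.exp (-(a * (j:ℝ)^δ)))
        + (if j < J₀ then 1 else 0) with hGdef
    clear_value a β G
    have hGnonneg : ∀ j, 0 ≤ G j := by
      intro j
      have h1 : (0:ℝ) ≤ (1/2:ℝ)^j := by positivity
      have h2 : (0:ℝ) ≤ β * (((j:ℝ)+1) * Real.exp (-(a * (j:ℝ)^δ))) :=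
        mul_nonneg hβ0.le (mul_nonneg (by positivity) (Real.exp_nonneg _))
      simp only [hGdef]
      split <;> linarith
    have hGsum : Summable G := by
      rw [hGdef]
      refine Summable.add (Summable.add ?_ ?_) ?_
      · exact summable_geometric_of_lt_one (by norm_num) (by norm_num)
      · exact (summable_aux ha0 hδ).mul_left β
      · exact summable_of_ne_finset_zero (s := Finset.range J₀)
          (fun j hj => if_neg (by simpa using hj))
    have ht_half : t = ENNReal.ofReal (1/2) := by
      rw [htdef, one_div, ENNReal.ofReal_inv_of_pos (by norm_num)]
      norm_num
    have hbound : ∀ j : ℕ, μ (BAD r j) ≤ ENNReal.ofReal (G j) := by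
      intro j
      by_cases hj : j < J₀
      · calc μ (BAD r j) ≤ 1 := prob_le_one
          _ ≤ ENNReal.ofReal (G j) := by
            rw [← ENNReal.ofReal_one]
            refine ENNReal.ofReal_le_ofReal ?_
            have h1 : (0:ℝ) ≤ (1/2:ℝ)^j := by positivity
            have h2 : (0:ℝ) ≤ β * (((j:ℝ)+1) * Real.exp (-(a * (j:ℝ)^δ))) :=
              mul_nonneg hβ0.le (mul_nonneg (by positivity) (Real.exp_nonneg _))
            simp only [hGdef]
            split
            · linarith
            · exact absurd hj (by assumption)
      · have hj' : J₀ ≤ j := Nat.not_lt.mp hj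
        have hm := hmeasBAD r j (hJ₀ j hj')
        refine hm.trans ?_
        have hK_le : ((K j : ℕ):ℝ) ≤ β * ((j:ℝ)+1) := by
          have hceil : (⌈(j:ℝ)/c⌉₊ : ℝ) < (j:ℝ)/c + 1 := Nat.ceil_lt_add_one (by positivity)
          have hKj : (K j : ℕ) = 2 * ⌈(j:ℝ)/c⌉₊ + 2 * j + 2 := rfl
          have hcast : ((K j : ℕ):ℝ) = 2 * (⌈(j:ℝ)/c⌉₊ : ℝ) + 2 * (j:ℝ) + 2 := by
            rw [hKj]; push_cast; ring
          rw [hcast, hβ]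
          have hc2 : (0:ℝ) < 2 / c := by positivity
          have hj0 : (0:ℝ) ≤ (j:ℝ) := Nat.cast_nonneg j
          have hexp : (2/c) * ((j:ℝ)+1) = 2 * ((j:ℝ)/c) + 2/c := by field_simp
          nlinarith [hexp]
        have hhalf : ((1/2:ℝ))^(nn r j) ≤ Real.exp (-(a * (j:ℝ)^δ)) := by
          set y : ℝ := (j:ℝ)^δ / ((r:ℝ)+1) with hy
          have hy0 : 0 ≤ y := by positivity
          have hynn : y ≤ (nn r j : ℝ) := by
            have h1 : y ≤ (⌈y⌉₊ : ℝ) := Nat.le_ceil _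
            have h2 : nn r j = ⌈y⌉₊ + 1 := rfl
            rw [h2]; push_cast; linarith
          have h3 : ((1/2:ℝ))^(nn r j) = ((1/2:ℝ)) ^ ((nn r j : ℕ):ℝ) :=
            (Real.rpow_natCast _ _).symm
          rw [h3]
          have h4 : ((1/2:ℝ)) ^ ((nn r j : ℕ):ℝ) ≤ ((1/2:ℝ)) ^ y :=
            Real.rpow_le_rpow_of_exponent_ge (by norm_num) (by norm_num) hynn
          refine h4.trans ?_
          rw [Real.rpow_def_of_pos (by norm_num : (0:ℝ) < 1/2)]
          rw [show Real.log (1/2) = -Real.log 2 by rw [one_div, Real.log_inv]]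
          rw [Real.exp_le_exp]
          rw [ha, hy]
          field_simp
          exact le_rfl
        have heq : t ^ j + (K j) * t ^ (nn r j)
            = ENNReal.ofReal ((1/2:ℝ)^j + (K j : ℝ) * (1/2:ℝ)^(nn r j)) := by
          rw [ENNReal.ofReal_add (by positivity) (by positivity),
            ENNReal.ofReal_mul (by positivity), ENNReal.ofReal_pow (by norm_num),
            ENNReal.ofReal_pow (by norm_num), ENNReal.ofReal_natCast, ← ht_half]
        rw [heq]
        refine ENNReal.ofReal_le_ofReal ?_
        have hfinal : (K j : ℝ) * (1/2:ℝ)^(nn r j)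
            ≤ β * (((j:ℝ)+1) * Real.exp (-(a * (j:ℝ)^δ))) := by
          calc (K j : ℝ) * (1/2:ℝ)^(nn r j)
              ≤ (β * ((j:ℝ)+1)) * Real.exp (-(a * (j:ℝ)^δ)) := by
                refine mul_le_mul hK_le hhalf (by positivity)
                  (mul_nonneg hβ0.le (by positivity))
            _ = β * (((j:ℝ)+1) * Real.exp (-(a * (j:ℝ)^δ))) := by ring
        simp only [hGdef]
        split <;> linarith
    have hsum_ne : (∑' j, μ (BAD r j)) ≠ ⊤ := by
      refine ne_top_of_le_ne_top ?_ (ENNReal.tsum_le_tsum hbound)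
      rw [← ENNReal.ofReal_tsum_of_nonneg hGnonneg hGsum]
      exact ENNReal.ofReal_ne_top
    exact ae_eventually_notMem hsum_ne
  have hAE : ∀ᵐ ω ∂μ, (∀ i, 0 < ξ i ω) ∧ ∀ r : ℕ, ∀ᶠ j in atTop, ω ∉ BAD r j :=
    (ae_all_iff.mpr (fun i => (hpos i).mono fun ω h => h.1)).and (ae_all_iff.mpr hBC)
  -- pathwise endgame
  filter_upwards [hAE] with ω hω
  obtain ⟨hω1, hω2⟩ := hω
  have hps : ∀ n, partialSum ξ n ω = ∑ i ∈ Finset.range n, ξ i ω := fun n => rfl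
  have hSmono : StrictMono (fun k => partialSum ξ k ω) := by
    refine strictMono_nat_of_lt_succ (fun k => ?_)
    have h1 : partialSum ξ (k+1) ω = partialSum ξ k ω + ξ k ω := by
      rw [hps, hps, Finset.sum_range_succ]
    simp only [h1]
    linarith [hω1 k]
  have hS0 : ∀ k, 0 ≤ partialSum ξ k ω := fun k => Finset.sum_nonneg (fun i _ => (hω1 i).le)
  -- unboundedness of partial sums
  have hub : ∀ x : ℝ, ∃ N : ℕ, ∀ k, partialSum ξ k ω ≤ x → k < N := by
    intro x
    obtain ⟨J, hJ⟩ := eventually_atTop.mp (hω2 0)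
    set j := J + ⌈x⌉₊ with hj
    have hnot : ω ∉ BAD 0 j := hJ j (by omega)
    have hSK : (j:ℝ) < partialSum ξ (K j) ω := by
      by_contra h
      exact hnot ⟨hω1, Or.inl (not_lt.mp h)⟩
    refine ⟨K j, fun k hk => ?_⟩
    have hxj : x ≤ (j:ℝ) := by
      refine le_trans (Nat.le_ceil x) ?_
      exact_mod_cast Nat.le_add_left _ _
    exact hSmono.lt_iff_lt.mp (lt_of_le_of_lt (le_trans hk hxj) hSK)
  -- window cardinality bound
  have hwin : ∀ r j : ℕ, ω ∉ BAD r j →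
      ((Finset.range (K j)).filter
        (fun k => (j:ℝ) - 1 < partialSum ξ k ω ∧ partialSum ξ k ω ≤ (j:ℝ))).card < nn r j := by
    intro r j hnb
    by_contra hcon
    push_neg at hcon
    set W := (Finset.range (K j)).filter
      (fun k => (j:ℝ) - 1 < partialSum ξ k ω ∧ partialSum ξ k ω ≤ (j:ℝ)) with hW
    have hnn1 : 1 ≤ nn r j := Nat.le_add_left 1 _
    have hne : W.Nonempty := Finset.card_pos.mp (by omega)
    set k₀ := W.min' hne with hk₀
    set kmx := W.max' hne with hkmx
    have hk₀W : k₀ ∈ W := W.min'_mem hne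
    have hkmxW : kmx ∈ W := W.max'_mem hne
    have hsubI : W ⊆ Finset.Icc k₀ kmx :=
      fun k hk => Finset.mem_Icc.mpr ⟨W.min'_le k hk, W.le_max' k hk⟩
    have hcard2 : W.card ≤ kmx + 1 - k₀ := by
      have := Finset.card_le_card hsubI
      rwa [Nat.card_Icc] at this
    have hk0le : k₀ ≤ kmx := W.min'_le kmx hkmxW
    have hk0mx : k₀ + (nn r j - 1) ≤ kmx := by omega
    have hp₀ : (j:ℝ) - 1 < partialSum ξ k₀ ω := (Finset.mem_filter.mp hk₀W).2.1
    have hpm : partialSum ξ kmx ω ≤ (j:ℝ) := (Finset.mem_filter.mp hkmxW).2.2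
    have hmono2 : partialSum ξ (k₀ + (nn r j - 1)) ω ≤ partialSum ξ kmx ω :=
      hSmono.monotone hk0mx
    have hsumIco : ∑ i ∈ Finset.Ico k₀ (k₀ + (nn r j - 1)), ξ i ω
        = partialSum ξ (k₀ + (nn r j - 1)) ω - partialSum ξ k₀ ω := by
      rw [hps, hps, Finset.sum_Ico_eq_sub _ (Nat.le_add_right _ _)]
    have hle1 : ∑ i ∈ Finset.Ico k₀ (k₀ + (nn r j - 1)), ξ i ω ≤ 1 := by
      rw [hsumIco]; linarith
    have hk₀K : k₀ < K j := Finset.mem_range.mp (Finset.mem_filter.mp hk₀W).1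
    exact hnb ⟨hω1, Or.inr ⟨k₀, hk₀K, hle1⟩⟩
  -- properties of F
  have hF0 : ∀ x, 0 ≤ F x := fun x => by rw [hF]; exact ENNReal.toReal_nonneg
  have hF1 : ∀ x, F x ≤ 1 := by
    intro x; rw [hF]
    calc (μ {ω | η 0 ω ≤ x}).toReal ≤ (1:ℝ≥0∞).toReal :=
          ENNReal.toReal_mono (by norm_num) prob_le_one
      _ = 1 := by simp
  have hFmono : Monotone F := by
    intro x y hxy
    rw [hF, hF]
    refine ENNReal.toReal_mono (measure_ne_top μ _) (measure_mono ?_)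
    exact fun ω' hω' => le_trans hω' hxy
  -- nonnegativity of the summands
  have hterm : ∀ m : ℕ, ∀ k,
      0 ≤ (if partialSum ξ k ω ≤ (m:ℝ)+1 then F ((m:ℝ)+1 - partialSum ξ k ω) else 0)
        - (if partialSum ξ k ω ≤ (m:ℝ) then F ((m:ℝ) - partialSum ξ k ω) else 0) := by
    intro m k
    by_cases h1 : partialSum ξ k ω ≤ (m:ℝ)
    · rw [if_pos (le_trans h1 (by linarith)), if_pos h1]
      have := hFmono (show (m:ℝ) - partialSum ξ k ω ≤ (m:ℝ)+1 - partialSum ξ k ω by linarith)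
      linarith
    · rw [if_neg h1]
      have h2 : (0:ℝ) ≤ (if partialSum ξ k ω ≤ (m:ℝ)+1 then F ((m:ℝ)+1 - partialSum ξ k ω) else 0) := by
        split
        · exact hF0 _
        · exact le_refl 0
      linarith
  have hD0 : ∀ m, 0 ≤ prwFdiff ξ F m ω := fun m => tsum_nonneg (hterm m)
  -- main estimate
  have hmain : ∀ r : ℕ, ∃ Cr : ℕ, ∀ᶠ m : ℕ in atTop,
      prwFdiff ξ F m ω ≤ 3 * ((Cr:ℝ) + ((nn r (m+1) : ℕ) : ℝ)) := by
    intro r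
    obtain ⟨J, hJ⟩ := eventually_atTop.mp (hω2 r)
    obtain ⟨Cst, hCst⟩ := hub (J:ℝ)
    refine ⟨Cst, ?_⟩
    filter_upwards [eventually_ge_atTop J] with m hm
    obtain ⟨NN, hNN⟩ := hub ((m:ℝ)+1)
    set s : Finset ℕ := (Finset.range NN).filter (fun k => partialSum ξ k ω ≤ (m:ℝ)+1) with hs
    set gterm : ℕ → ℝ := fun k =>
      (if partialSum ξ k ω ≤ (m:ℝ)+1 then F ((m:ℝ)+1 - partialSum ξ k ω) else 0)
      - (if partialSum ξ k ω ≤ (m:ℝ) then F ((m:ℝ) - partialSum ξ k ω) else 0) with hgterm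
    have hzero : ∀ k, k ∉ s → gterm k = 0 := by
      intro k hk
      have hnot : ¬ partialSum ξ k ω ≤ (m:ℝ)+1 := by
        intro hle
        exact hk (Finset.mem_filter.mpr ⟨Finset.mem_range.mpr (hNN k hle), hle⟩)
      have hnot2 : ¬ partialSum ξ k ω ≤ (m:ℝ) := fun hle => hnot (by linarith)
      simp only [hgterm, if_neg hnot, if_neg hnot2, sub_zero]
    have hprw : prwFdiff ξ F m ω = ∑ k ∈ s, gterm k := by
      have h0 : prwFdiff ξ F m ω = ∑' k, gterm k := rfl
      rw [h0]
      exact tsum_eq_sum hzero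
    have hmaps : ∀ k ∈ s, ⌈partialSum ξ k ω⌉₊ ∈ Finset.range (m+2) := by
      intro k hk
      have hle : partialSum ξ k ω ≤ (m:ℝ)+1 := (Finset.mem_filter.mp hk).2
      have h1 : ⌈partialSum ξ k ω⌉₊ ≤ m+1 := by
        refine Nat.ceil_le.mpr ?_
        push_cast
        linarith
      exact Finset.mem_range.mpr (by omega)
    have hfib : ∑ k ∈ s, gterm k
        = ∑ j ∈ Finset.range (m+2),
            ∑ k ∈ s.filter (fun k => ⌈partialSum ξ k ω⌉₊ = j), gterm k :=
      (Finset.sum_fiberwise_of_maps_to hmaps _).symm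
    -- cardinality bound for fibers
    have hcard : ∀ j, j ≤ m+1 →
        (s.filter (fun k => ⌈partialSum ξ k ω⌉₊ = j)).card ≤ Cst + nn r (m+1) := by
      intro j hj
      by_cases hjJ : J ≤ j
      · have hBADnot := hJ j hjJ
        have hwinj := hwin r j hBADnot
        have hSK : (j:ℝ) < partialSum ξ (K j) ω := by
          by_contra h
          exact hBADnot ⟨hω1, Or.inl (not_lt.mp h)⟩
        have hsubW : s.filter (fun k => ⌈partialSum ξ k ω⌉₊ = j)
            ⊆ (Finset.range (K j)).filter
              (fun k => (j:ℝ) - 1 < partialSum ξ k ω ∧ partialSum ξ k ω ≤ (j:ℝ)) := by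
          intro k hk
          obtain ⟨hk1, hk2⟩ := Finset.mem_filter.mp hk
          have hSkj : partialSum ξ k ω ≤ (j:ℝ) := by
            rw [← hk2]; exact Nat.le_ceil _
          have hlow : (j:ℝ) - 1 < partialSum ξ k ω := by
            rcases Nat.eq_zero_or_pos j with h0 | h0
            · have := hS0 k
              rw [h0]
              push_cast
              linarith
            · by_contra hcon2
              push_neg at hcon2
              have hca : ((j - 1 : ℕ):ℝ) = (j:ℝ) - 1 := by
                rw [Nat.cast_sub h0]; norm_num
              have : ⌈partialSum ξ k ω⌉₊ ≤ j - 1 := Nat.ceil_le.mpr (by rw [hca]; exact hcon2)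
              omega
          have hkK : k < K j :=
            hSmono.lt_iff_lt.mp (lt_of_le_of_lt hSkj hSK)
          exact Finset.mem_filter.mpr ⟨Finset.mem_range.mpr hkK, hlow, hSkj⟩
        have h1 := Finset.card_le_card hsubW
        have h2 : nn r j ≤ nn r (m+1) := by
          have hle : ((j:ℕ):ℝ)^δ ≤ (((m+1:ℕ)):ℝ)^δ := by
            refine Real.rpow_le_rpow (Nat.cast_nonneg _) ?_ hδ.le
            exact_mod_cast hj
          have hdiv : ((j:ℕ):ℝ)^δ / ((r:ℝ)+1) ≤ (((m+1:ℕ)):ℝ)^δ / ((r:ℝ)+1) := by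
            gcongr
          have := Nat.ceil_mono hdiv
          have e1 : nn r j = ⌈((j:ℕ):ℝ)^δ / ((r:ℝ)+1)⌉₊ + 1 := rfl
          have e2 : nn r (m+1) = ⌈(((m+1:ℕ)):ℝ)^δ / ((r:ℝ)+1)⌉₊ + 1 := rfl
          omega
        omega
      · have hsubC : s.filter (fun k => ⌈partialSum ξ k ω⌉₊ = j) ⊆ Finset.range Cst := by
          intro k hk
          obtain ⟨hk1, hk2⟩ := Finset.mem_filter.mp hk
          have hSkj : partialSum ξ k ω ≤ (j:ℝ) := by
            rw [← hk2]; exact Nat.le_ceil _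
          have hjJ' : (j:ℝ) ≤ (J:ℝ) := by
            exact_mod_cast (Nat.not_le.mp hjJ).le
          exact Finset.mem_range.mpr (hCst k (le_trans hSkj hjJ'))
        have h1 := Finset.card_le_card hsubC
        rw [Finset.card_range] at h1
        omega
    -- term bounds on fibers
    have hwj : ∀ j ∈ Finset.range (m+1), ∀ k ∈ s.filter (fun k => ⌈partialSum ξ k ω⌉₊ = j),
        gterm k ≤ F ((m:ℝ)+2-(j:ℝ)) - F ((m:ℝ)-(j:ℝ)) := by
      intro j hj k hk
      obtain ⟨hk1, hk2⟩ := Finset.mem_filter.mp hk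
      have hjm : j ≤ m := Nat.lt_succ_iff.mp (Finset.mem_range.mp hj)
      have hSkj : partialSum ξ k ω ≤ (j:ℝ) := by
        rw [← hk2]; exact Nat.le_ceil _
      have hjmr : (j:ℝ) ≤ (m:ℝ) := by exact_mod_cast hjm
      have hSkm : partialSum ξ k ω ≤ (m:ℝ) := le_trans hSkj hjmr
      have hSkm1 : partialSum ξ k ω ≤ (m:ℝ)+1 := by linarith
      have hlow : (j:ℝ) - 1 ≤ partialSum ξ k ω := by
        rcases Nat.eq_zero_or_pos j with h0 | h0
        · have := hS0 k
          rw [h0]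
          push_cast
          linarith
        · by_contra hcon2
          push_neg at hcon2
          have hca : ((j - 1 : ℕ):ℝ) = (j:ℝ) - 1 := by
            rw [Nat.cast_sub h0]; norm_num
          have : ⌈partialSum ξ k ω⌉₊ ≤ j - 1 := Nat.ceil_le.mpr (by rw [hca]; linarith)
          omega
      simp only [hgterm, if_pos hSkm1, if_pos hSkm]
      have hu : F ((m:ℝ)+1 - partialSum ξ k ω) ≤ F ((m:ℝ)+2-(j:ℝ)) := hFmono (by linarith)
      have hl : F ((m:ℝ)-(j:ℝ)) ≤ F ((m:ℝ) - partialSum ξ k ω) := hFmono (by linarith)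
      linarith
    have hlast : ∀ k ∈ s.filter (fun k => ⌈partialSum ξ k ω⌉₊ = m+1), gterm k ≤ 1 := by
      intro k hk
      have h2 : (0:ℝ) ≤ (if partialSum ξ k ω ≤ (m:ℝ) then F ((m:ℝ) - partialSum ξ k ω) else 0) := by
        split
        · exact hF0 _
        · exact le_refl 0
      have h1 : (if partialSum ξ k ω ≤ (m:ℝ)+1 then F ((m:ℝ)+1 - partialSum ξ k ω) else 0) ≤ 1 := by
        split
        · exact hF1 _
        · norm_num
      simp only [hgterm]
      linarith
    -- assemble
    set B : ℝ := (Cst : ℝ) + ((nn r (m+1) : ℕ) : ℝ) with hB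
    have hBnn : (0:ℝ) ≤ B := by positivity
    have hcardB : ∀ j, j ≤ m+1 →
        ((s.filter (fun k => ⌈partialSum ξ k ω⌉₊ = j)).card : ℝ) ≤ B := by
      intro j hj
      have h := hcard j hj
      calc ((s.filter (fun k => ⌈partialSum ξ k ω⌉₊ = j)).card : ℝ)
          ≤ ((Cst + nn r (m+1) : ℕ) : ℝ) := Nat.cast_le.mpr h
        _ = B := by rw [hB]; push_cast; ring
    have hsum1 : ∑ j ∈ Finset.range (m+1),
          ∑ k ∈ s.filter (fun k => ⌈partialSum ξ k ω⌉₊ = j), gterm k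
        ≤ ∑ j ∈ Finset.range (m+1), B * (F ((m:ℝ)+2-(j:ℝ)) - F ((m:ℝ)-(j:ℝ))) := by
      refine Finset.sum_le_sum (fun j hj => ?_)
      have hwnn : 0 ≤ F ((m:ℝ)+2-(j:ℝ)) - F ((m:ℝ)-(j:ℝ)) := by
        have := hFmono (show (m:ℝ)-(j:ℝ) ≤ (m:ℝ)+2-(j:ℝ) by linarith)
        linarith
      calc ∑ k ∈ s.filter (fun k => ⌈partialSum ξ k ω⌉₊ = j), gterm k
          ≤ (s.filter (fun k => ⌈partialSum ξ k ω⌉₊ = j)).card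
              • (F ((m:ℝ)+2-(j:ℝ)) - F ((m:ℝ)-(j:ℝ))) :=
            Finset.sum_le_card_nsmul _ _ _ (hwj j hj)
        _ = ((s.filter (fun k => ⌈partialSum ξ k ω⌉₊ = j)).card : ℝ)
              * (F ((m:ℝ)+2-(j:ℝ)) - F ((m:ℝ)-(j:ℝ))) := nsmul_eq_mul _ _
        _ ≤ B * (F ((m:ℝ)+2-(j:ℝ)) - F ((m:ℝ)-(j:ℝ))) := by
            refine mul_le_mul_of_nonneg_right ?_ hwnn
            exact hcardB j (by
              have := Finset.mem_range.mp hj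
              omega)
    have hsum2 : ∑ k ∈ s.filter (fun k => ⌈partialSum ξ k ω⌉₊ = m+1), gterm k ≤ B := by
      calc ∑ k ∈ s.filter (fun k => ⌈partialSum ξ k ω⌉₊ = m+1), gterm k
          ≤ (s.filter (fun k => ⌈partialSum ξ k ω⌉₊ = m+1)).card • (1:ℝ) :=
            Finset.sum_le_card_nsmul _ _ _ hlast
        _ = ((s.filter (fun k => ⌈partialSum ξ k ω⌉₊ = m+1)).card : ℝ) := by
            rw [nsmul_eq_mul, mul_one]
        _ ≤ B := hcardB (m+1) le_rfl
    have htel := telescope_aux F hF0 hF1 m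
    rw [hprw, hfib, Finset.sum_range_succ]
    have hBsum : ∑ j ∈ Finset.range (m+1), B * (F ((m:ℝ)+2-(j:ℝ)) - F ((m:ℝ)-(j:ℝ)))
        = B * ∑ j ∈ Finset.range (m+1), (F ((m:ℝ)+2-(j:ℝ)) - F ((m:ℝ)-(j:ℝ))) :=
      (Finset.mul_sum _ _ _).symm
    have hfinal : B * ∑ j ∈ Finset.range (m+1), (F ((m:ℝ)+2-(j:ℝ)) - F ((m:ℝ)-(j:ℝ))) ≤ B * 2 :=
      mul_le_mul_of_nonneg_left htel hBnn
    calc (∑ j ∈ Finset.range (m+1),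
            ∑ k ∈ s.filter (fun k => ⌈partialSum ξ k ω⌉₊ = j), gterm k)
          + ∑ k ∈ s.filter (fun k => ⌈partialSum ξ k ω⌉₊ = m+1), gterm k
        ≤ B * 2 + B := by
          refine add_le_add (le_trans hsum1 ?_) hsum2
          rw [hBsum]
          exact hfinal
      _ = 3 * B := by ring
      _ = 3 * ((Cst:ℝ) + ((nn r (m+1) : ℕ) : ℝ)) := by rw [hB]
  -- conclude
  rw [NormedAddCommGroup.tendsto_nhds_zero]
  intro ε hε
  have h2δ : (0:ℝ) < (2:ℝ)^δ := Real.rpow_pos_of_pos (by norm_num) δ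
  obtain ⟨r, hrr⟩ := exists_nat_gt (6 * (2:ℝ)^δ / ε)
  have hr : 3 * (2:ℝ)^δ / ((r:ℝ)+1) < ε / 2 := by
    have hr1 : 6 * (2:ℝ)^δ / ε < (r:ℝ)+1 := lt_of_lt_of_le hrr (by linarith)
    rw [div_lt_iff₀ (by positivity)]
    rw [div_lt_iff₀ hε] at hr1
    linarith
  obtain ⟨Cr, hCr⟩ := hmain r
  have htend0 : Tendsto (fun m:ℕ => (m:ℝ)^(-δ)) atTop (nhds 0) :=
    (tendsto_rpow_neg_atTop hδ).comp tendsto_natCast_atTop_atTop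
  have hev2 : ∀ᶠ m : ℕ in atTop, 3 * ((Cr:ℝ)+2) * (m:ℝ)^(-δ) < ε/2 := by
    have h3 : Tendsto (fun m:ℕ => 3 * ((Cr:ℝ)+2) * (m:ℝ)^(-δ)) atTop (nhds 0) := by
      have h4 := htend0.const_mul (3 * ((Cr:ℝ)+2))
      rw [mul_zero] at h4
      exact h4
    exact h3.eventually_lt_const (by linarith)
  filter_upwards [hCr, hev2, eventually_ge_atTop 1] with m h1 h2 h3
  have hm1 : (1:ℝ) ≤ (m:ℝ) := by exact_mod_cast h3
  have hp0 : (0:ℝ) ≤ (m:ℝ)^(-δ) := Real.rpow_nonneg (by positivity) _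
  have hpy : (m:ℝ)^(-δ) * (((m+1:ℕ)):ℝ)^δ ≤ (2:ℝ)^δ := by
    have hmp : (0:ℝ) < (m:ℝ)^δ := Real.rpow_pos_of_pos (by linarith) δ
    have hle : (((m+1:ℕ)):ℝ)^δ ≤ ((2:ℝ)*(m:ℝ))^δ := by
      refine Real.rpow_le_rpow (by positivity) ?_ hδ.le
      push_cast
      linarith
    have hmul : ((2:ℝ)*(m:ℝ))^δ = (2:ℝ)^δ * (m:ℝ)^δ :=
      Real.mul_rpow (by norm_num) (by linarith)
    have hneg : (m:ℝ)^(-δ) = ((m:ℝ)^δ)⁻¹ := Real.rpow_neg (by linarith) δ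
    calc (m:ℝ)^(-δ) * (((m+1:ℕ)):ℝ)^δ ≤ (m:ℝ)^(-δ) * ((2:ℝ)^δ * (m:ℝ)^δ) := by
          rw [hmul] at hle
          exact mul_le_mul_of_nonneg_left hle hp0
      _ = (2:ℝ)^δ * ((m:ℝ)^δ * ((m:ℝ)^δ)⁻¹) := by rw [hneg]; ring
      _ = (2:ℝ)^δ := by rw [mul_inv_cancel₀ (ne_of_gt hmp), mul_one]
  have hnnle : ((nn r (m+1) : ℕ) : ℝ) ≤ (((m+1:ℕ)):ℝ)^δ/((r:ℝ)+1) + 2 := by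
    have e1 : nn r (m+1) = ⌈(((m+1:ℕ)):ℝ)^δ / ((r:ℝ)+1)⌉₊ + 1 := rfl
    have hy0 : (0:ℝ) ≤ (((m+1:ℕ)):ℝ)^δ / ((r:ℝ)+1) := by positivity
    have h5 := Nat.ceil_lt_add_one hy0
    rw [e1]
    push_cast at h5 ⊢
    linarith
  rw [Real.norm_eq_abs, abs_of_nonneg (mul_nonneg hp0 (hD0 m))]
  have hstep : (m:ℝ)^(-δ) * prwFdiff ξ F m ω
      ≤ 3 * ((Cr:ℝ)+2) * (m:ℝ)^(-δ) + 3 * ((m:ℝ)^(-δ) * (((m+1:ℕ)):ℝ)^δ) / ((r:ℝ)+1) := by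
    have hs1 : (m:ℝ)^(-δ) * prwFdiff ξ F m ω
        ≤ (m:ℝ)^(-δ) * (3 * ((Cr:ℝ) + ((nn r (m+1) : ℕ) : ℝ))) :=
      mul_le_mul_of_nonneg_left h1 hp0
    have hs2 : (m:ℝ)^(-δ) * (3 * ((Cr:ℝ) + ((nn r (m+1) : ℕ) : ℝ)))
        ≤ (m:ℝ)^(-δ) * (3 * (((Cr:ℝ)+2) + (((m+1:ℕ)):ℝ)^δ/((r:ℝ)+1))) := by
      refine mul_le_mul_of_nonneg_left ?_ hp0
      linarith
    refine le_trans hs1 (le_trans hs2 (le_of_eq ?_))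
    field_simp
  have hlast2 : 3 * ((m:ℝ)^(-δ) * (((m+1:ℕ)):ℝ)^δ) / ((r:ℝ)+1) ≤ 3 * (2:ℝ)^δ / ((r:ℝ)+1) := by
    gcongr
  linarith
end
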